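/- arXiv:1903.02216 — 7 statements merged into one kernel-verified Lean document; each statement's English description precedes it below -/
import Mathlib

section
/- Let N ≥ 2 be an integer and β > N. Then there exists a unique x > 0 satisfying x = β f(x). -/
open MeasureTheory Real Set

noncomputable section



def bJ (n : ℕ) (x : ℝ) : ℝ := ∫ θ in (0:ℝ)..π, exp (x * cos θ) * sin θ ^ n
def bK (n : ℕ) (x : ℝ) : ℝ := ∫ θ in (0:ℝ)..π, exp (x * cos θ) * cos θ ^ 2 * sin θ ^ n

lemma contJ (n : ℕ) (x : ℝ) : Continuous fun θ : ℝ => exp (x * cos θ) * sin θ ^ n := by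
  fun_prop

lemma contK (n : ℕ) (x : ℝ) :
    Continuous fun θ : ℝ => exp (x * cos θ) * cos θ ^ 2 * sin θ ^ n := by fun_prop

lemma iiJ (n : ℕ) (x : ℝ) (a b : ℝ) :
    IntervalIntegrable (fun θ : ℝ => exp (x * cos θ) * sin θ ^ n) volume a b :=
  (contJ n x).intervalIntegrable a b

lemma iiK (n : ℕ) (x : ℝ) (a b : ℝ) :
    IntervalIntegrable (fun θ : ℝ => exp (x * cos θ) * cos θ ^ 2 * sin θ ^ n) volume a b :=
  (contK n x).intervalIntegrable a b

lemma bJ_pos (n : ℕ) (x : ℝ) : 0 < bJ n x := by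
  apply intervalIntegral.intervalIntegral_pos_of_pos_on (iiJ n x 0 π)
  · intro θ hθ
    have := Real.sin_pos_of_pos_of_lt_pi hθ.1 hθ.2
    positivity
  · exact pi_pos

lemma bK_pos_aux (n : ℕ) (x : ℝ) : 0 ≤ bK n x := by
  apply intervalIntegral.integral_nonneg pi_pos.le
  intro θ hθ
  have := Real.sin_nonneg_of_nonneg_of_le_pi hθ.1 hθ.2
  positivity

lemma reflect (f : ℝ → ℝ) (n : ℕ) :
    (∫ θ in (0:ℝ)..π, f (-cos θ) * sin θ ^ n) = ∫ θ in (0:ℝ)..π, f (cos θ) * sin θ ^ n := by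
  have h := intervalIntegral.integral_comp_sub_left (fun θ => f (cos θ) * sin θ ^ n) π
    (a := 0) (b := π)
  simp only [Real.cos_pi_sub, Real.sin_pi_sub, sub_self, sub_zero] at h
  exact h

lemma bJ_neg (n : ℕ) (x : ℝ) : bJ n (-x) = bJ n x := by
  have := reflect (fun t => exp (x * t)) n
  simp only [mul_neg, ← neg_mul] at this
  simpa [bJ, neg_mul, mul_comm] using this

lemma bK_neg (n : ℕ) (x : ℝ) : bK n (-x) = bK n x := by
  have := reflect (fun t => exp (x * t) * t ^ 2) n
  simp only [mul_neg, neg_sq, ← neg_mul] at this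
  simpa [bK, neg_mul, mul_assoc] using this

lemma bJ_split (N : ℕ) (hN : 2 ≤ N) (x : ℝ) : bJ N x = bJ (N-2) x - bK (N-2) x := by
  have key : ∀ θ : ℝ, exp (x * cos θ) * sin θ ^ N
      = exp (x * cos θ) * sin θ ^ (N-2) - exp (x * cos θ) * cos θ ^ 2 * sin θ ^ (N-2) := by
    intro θ
    have h2 : sin θ ^ N = sin θ ^ (N-2) * sin θ ^ 2 := by
      rw [← pow_add]; congr 1; omega
    rw [h2, Real.sin_sq θ]; ring
  simp only [bJ, bK, key]
  exact intervalIntegral.integral_sub (iiJ (N-2) x 0 π) (iiK (N-2) x 0 π)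

lemma bJ_zero_succ (N : ℕ) (hN : 2 ≤ N) : bJ N 0 = ((N:ℝ) - 1)/(N:ℝ) * bJ (N-2) 0 := by
  have h := integral_sin_pow (a := 0) (b := π) (N - 2)
  have hN2 : N - 2 + 2 = N := by omega
  rw [hN2] at h
  have hcast : ((N - 2 : ℕ) : ℝ) = (N : ℝ) - 2 := by
    push_cast [Nat.cast_sub hN]; ring
  simp only [bJ, zero_mul, Real.exp_zero, one_mul]
  rw [h, Real.sin_zero, Real.sin_pi, zero_pow (Nat.succ_ne_zero _), hcast]
  ring

lemma bK_zero (N : ℕ) (hN : 2 ≤ N) : bK (N-2) 0 = (1/(N:ℝ)) * bJ (N-2) 0 := by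
  have h1 := bJ_split N hN 0
  have h2 := bJ_zero_succ N hN
  have hbK : bK (N-2) 0 = bJ (N-2) 0 - ((N:ℝ) - 1)/(N:ℝ) * bJ (N-2) 0 := by linarith
  have hNpos : (0:ℝ) < N := by positivity
  rw [hbK]; field_simp; ring
lemma cont_param (u : ℝ → ℝ) (hu : Continuous u) (hub : ∀ θ, |u θ| ≤ 1) :
    Continuous fun x : ℝ => ∫ θ in Ioc (0:ℝ) π, exp (x * cos θ) * u θ := by
  rw [continuous_iff_continuousAt]
  intro x₀
  apply continuousAt_of_dominated (bound := fun _ => Real.exp (|x₀| + 1))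
  · filter_upwards with x
    exact ((Real.continuous_exp.comp (continuous_const.mul Real.continuous_cos)).mul hu).aestronglyMeasurable
  · filter_upwards [Metric.ball_mem_nhds x₀ one_pos] with x hx
    filter_upwards with θ
    have h1 : ‖exp (x * cos θ) * u θ‖ ≤ Real.exp (x * cos θ) := by
      rw [norm_mul, Real.norm_eq_abs, Real.norm_eq_abs, abs_of_pos (Real.exp_pos _)]
      calc Real.exp (x * cos θ) * |u θ| ≤ Real.exp (x * cos θ) * 1 := by
            exact mul_le_mul_of_nonneg_left (hub θ) (Real.exp_pos _).le
        _ = _ := mul_one _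
    refine h1.trans (Real.exp_le_exp.2 ?_)
    have hxc : x * cos θ ≤ |x| := by
      calc x * cos θ ≤ |x * cos θ| := le_abs_self _
        _ = |x| * |cos θ| := abs_mul _ _
        _ ≤ |x| * 1 := mul_le_mul_of_nonneg_left (Real.abs_cos_le_one θ) (abs_nonneg _)
        _ = |x| := mul_one _
    have : |x| ≤ |x₀| + 1 := by
      have := mem_ball_iff_norm.1 hx
      have h := abs_sub_abs_le_abs_sub x x₀
      rw [Real.norm_eq_abs] at this
      linarith
    linarith
  · exact integrableOn_const measure_Ioc_lt_top.ne
  · filter_upwards with θ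
    exact ((Real.continuous_exp.comp (continuous_id.mul continuous_const)).mul continuous_const).continuousAt

lemma bJ_cont (n : ℕ) : Continuous (bJ n) := by
  have : bJ n = fun x => ∫ θ in Ioc (0:ℝ) π, exp (x * cos θ) * sin θ ^ n := by
    funext x; exact intervalIntegral.integral_of_le pi_pos.le
  rw [this]
  apply cont_param _ (by fun_prop)
  intro θ
  rw [abs_pow]
  exact pow_le_one₀ (abs_nonneg _) (Real.abs_sin_le_one θ)

lemma bK_cont (n : ℕ) : Continuous (bK n) := by
  have : bK n = fun x => ∫ θ in Ioc (0:ℝ) π, exp (x * cos θ) * (cos θ ^ 2 * sin θ ^ n) := by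
    funext x
    rw [bK, intervalIntegral.integral_of_le pi_pos.le]
    congr 1; funext θ; ring
  rw [this]
  apply cont_param _ (by fun_prop)
  intro θ
  rw [abs_mul, abs_pow, abs_pow]
  have h1 : |cos θ| ^ 2 ≤ 1 := pow_le_one₀ (abs_nonneg _) (Real.abs_cos_le_one θ)
  have h2 : |sin θ| ^ n ≤ 1 := pow_le_one₀ (abs_nonneg _) (Real.abs_sin_le_one θ)
  nlinarith [abs_nonneg (cos θ), abs_nonneg (sin θ), pow_nonneg (abs_nonneg (sin θ)) n, sq_nonneg (|cos θ|)]
lemma sinh_identity (a b x y : ℝ) :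
    (a^2 - b^2) * (exp (y*a) * exp (x*b) - exp (y*b) * exp (x*a)
      + exp (-(y*a)) * exp (-(x*b)) - exp (-(y*b)) * exp (-(x*a)))
    = 4 * ((a - b) * Real.sinh ((y - x)*(a - b)/2)) * ((a + b) * Real.sinh ((y + x)*(a + b)/2)) := by
  simp only [Real.sinh_eq]
  have e1 : (exp ((y - x)*(a - b)/2) - exp (-((y - x)*(a - b)/2)))
      * (exp ((y + x)*(a + b)/2) - exp (-((y + x)*(a + b)/2)))
      = exp (y*a) * exp (x*b) - exp (y*b) * exp (x*a)
        + exp (-(y*a)) * exp (-(x*b)) - exp (-(y*b)) * exp (-(x*a)) := by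
    rw [sub_mul, mul_sub, mul_sub]
    simp only [← Real.exp_add]
    ring_nf
    simp only [← Real.exp_add]
    ring_nf
  linear_combination -(a^2 - b^2) * e1

lemma t_sinh_nonneg {c : ℝ} (hc : 0 ≤ c) (t : ℝ) : 0 ≤ t * Real.sinh (c * t / 2) := by
  rcases le_or_gt 0 t with h | h
  · exact mul_nonneg h (Real.sinh_nonneg_iff.2 (by positivity))
  · have h1 : c * t / 2 ≤ 0 := by
      apply div_nonpos_of_nonpos_of_nonneg _ (by norm_num)
      exact mul_nonpos_of_nonneg_of_nonpos hc h.le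
    have := Real.sinh_nonpos_iff.2 h1
    nlinarith

lemma mono_key (n : ℕ) {x y : ℝ} (hx : 0 ≤ x) (hxy : x < y) :
    bK n x * bJ n y < bK n y * bJ n x := by
  set ν : Measure ℝ := volume.restrict (Ioc (0:ℝ) π) with hν
  set E : ℝ → ℝ → ℝ := fun c θ => exp (c * cos θ) * sin θ ^ n with hE
  set F : ℝ → ℝ → ℝ := fun c θ => exp (c * cos θ) * cos θ ^ 2 * sin θ ^ n with hF
  have hbJ : ∀ c, bJ n c = ∫ θ, E c θ ∂ν := fun c =>
    intervalIntegral.integral_of_le pi_pos.le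
  have hbK : ∀ c, bK n c = ∫ θ, F c θ ∂ν := fun c =>
    intervalIntegral.integral_of_le pi_pos.le
  have hIE : ∀ c, Integrable (E c) ν := fun c =>
    (contJ n c).integrableOn_Ioc
  have hIF : ∀ c, Integrable (F c) ν := fun c =>
    (contK n c).integrableOn_Ioc
  set Q : ℝ × ℝ → ℝ := fun z =>
      (F y z.1 * E x z.2 - E y z.1 * F x z.2)
    + (E x z.1 * F y z.2 - F x z.1 * E y z.2)
    + (F (-y) z.1 * E (-x) z.2 - E (-y) z.1 * F (-x) z.2)
    + (E (-x) z.1 * F (-y) z.2 - F (-x) z.1 * E (-y) z.2) with hQdef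
  set μ : Measure (ℝ × ℝ) := ν.prod ν with hμ
  -- integrability of the eight product terms
  have hI1 := (hIF y).mul_prod (hIE x)
  have hI2 := (hIE y).mul_prod (hIF x)
  have hI3 := (hIE x).mul_prod (hIF y)
  have hI4 := (hIF x).mul_prod (hIE y)
  have hI5 := (hIF (-y)).mul_prod (hIE (-x))
  have hI6 := (hIE (-y)).mul_prod (hIF (-x))
  have hI7 := (hIE (-x)).mul_prod (hIF (-y))
  have hI8 := (hIF (-x)).mul_prod (hIE (-y))
  have hQint : Integrable Q μ := by
    apply Integrable.add
    apply Integrable.add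
    apply Integrable.add
    · exact hI1.sub hI2
    · exact hI3.sub hI4
    · exact hI5.sub hI6
    · exact hI7.sub hI8
  have hQeval : ∫ z, Q z ∂μ = 4 * (bK n y * bJ n x - bJ n y * bK n x) := by
    have e1 : ∫ z, Q z ∂μ =
        ((∫ θ, F y θ ∂ν) * (∫ θ, E x θ ∂ν) - (∫ θ, E y θ ∂ν) * (∫ θ, F x θ ∂ν))
      + ((∫ θ, E x θ ∂ν) * (∫ θ, F y θ ∂ν) - (∫ θ, F x θ ∂ν) * (∫ θ, E y θ ∂ν))
      + ((∫ θ, F (-y) θ ∂ν) * (∫ θ, E (-x) θ ∂ν) - (∫ θ, E (-y) θ ∂ν) * (∫ θ, F (-x) θ ∂ν))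
      + ((∫ θ, E (-x) θ ∂ν) * (∫ θ, F (-y) θ ∂ν) - (∫ θ, F (-x) θ ∂ν) * (∫ θ, E (-y) θ ∂ν)) := by
      have hIg1 : Integrable (fun z : ℝ × ℝ => F y z.1 * E x z.2 - E y z.1 * F x z.2) μ := hI1.sub hI2
      have hIg2 : Integrable (fun z : ℝ × ℝ => E x z.1 * F y z.2 - F x z.1 * E y z.2) μ := hI3.sub hI4
      have hIg3 : Integrable (fun z : ℝ × ℝ => F (-y) z.1 * E (-x) z.2 - E (-y) z.1 * F (-x) z.2) μ := hI5.sub hI6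
      have hIg4 : Integrable (fun z : ℝ × ℝ => E (-x) z.1 * F (-y) z.2 - F (-x) z.1 * E (-y) z.2) μ := hI7.sub hI8
      have hIg12 : Integrable (fun z : ℝ × ℝ => (F y z.1 * E x z.2 - E y z.1 * F x z.2)
          + (E x z.1 * F y z.2 - F x z.1 * E y z.2)) μ := hIg1.add hIg2
      have hIg123 : Integrable (fun z : ℝ × ℝ => (F y z.1 * E x z.2 - E y z.1 * F x z.2)
          + (E x z.1 * F y z.2 - F x z.1 * E y z.2)
          + (F (-y) z.1 * E (-x) z.2 - E (-y) z.1 * F (-x) z.2)) μ := hIg12.add hIg3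
      simp only [hQdef]
      rw [integral_add hIg123 hIg4, integral_add hIg12 hIg3, integral_add hIg1 hIg2,
          integral_sub hI1 hI2, integral_sub hI3 hI4, integral_sub hI5 hI6, integral_sub hI7 hI8,
          integral_prod_mul, integral_prod_mul, integral_prod_mul, integral_prod_mul,
          integral_prod_mul, integral_prod_mul, integral_prod_mul, integral_prod_mul]
    rw [e1, ← hbJ, ← hbJ, ← hbJ, ← hbJ, ← hbK, ← hbK, ← hbK, ← hbK,
        bJ_neg, bJ_neg, bK_neg, bK_neg]
    ring
  have hQform : ∀ z : ℝ × ℝ, Q z =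
      4 * ((cos z.1 - cos z.2) * Real.sinh ((y - x) * (cos z.1 - cos z.2) / 2))
        * ((cos z.1 + cos z.2) * Real.sinh ((y + x) * (cos z.1 + cos z.2) / 2))
        * (sin z.1 ^ n * sin z.2 ^ n) := by
    intro z
    have h := sinh_identity (cos z.1) (cos z.2) x y
    simp only [hQdef, hE, hF, neg_mul]
    linear_combination (sin z.1 ^ n * sin z.2 ^ n) * h
  have hae : ∀ᵐ z ∂μ, z ∈ (Ioc (0:ℝ) π) ×ˢ (Ioc (0:ℝ) π) := by
    rw [hμ, hν, Measure.prod_restrict]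
    exact ae_restrict_mem (measurableSet_Ioc.prod measurableSet_Ioc)
  have hQnonneg : 0 ≤ᵐ[μ] Q := by
    filter_upwards [hae] with z hz
    rw [Pi.zero_apply, hQform z]
    have h1 : 0 ≤ (cos z.1 - cos z.2) * Real.sinh ((y - x) * (cos z.1 - cos z.2) / 2) :=
      t_sinh_nonneg (by linarith) _
    have h2 : 0 ≤ (cos z.1 + cos z.2) * Real.sinh ((y + x) * (cos z.1 + cos z.2) / 2) :=
      t_sinh_nonneg (by linarith) _
    have hs1 : 0 ≤ sin z.1 := Real.sin_nonneg_of_nonneg_of_le_pi hz.1.1.le hz.1.2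
    have hs2 : 0 ≤ sin z.2 := Real.sin_nonneg_of_nonneg_of_le_pi hz.2.1.le hz.2.2
    exact mul_nonneg (mul_nonneg (mul_nonneg (by norm_num) h1) h2)
      (mul_nonneg (pow_nonneg hs1 n) (pow_nonneg hs2 n))
  have hsupp : (Ioc (π/8) (π/4)) ×ˢ (Ioc (3*π/8) (π/2)) ⊆ Function.support Q := by
    rintro ⟨θ, η⟩ ⟨hθ, hη⟩
    simp only [Set.mem_Ioc] at hθ hη
    have hpi := pi_pos
    have hθ0 : 0 < θ := lt_trans (by linarith) hθ.1
    have hθpi : θ < π := lt_of_le_of_lt hθ.2 (by linarith)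
    have hη0 : 0 < η := lt_trans (by linarith) hη.1
    have hηpi : η < π := lt_of_le_of_lt hη.2 (by linarith)
    have hab : cos η < cos θ := by
      have h1 : cos η < cos (3*π/8) :=
        Real.cos_lt_cos_of_nonneg_of_le_pi (by linarith) (by linarith) hη.1
      have h2 : cos (3*π/8) < cos (π/4) :=
        Real.cos_lt_cos_of_nonneg_of_le_pi (by linarith) (by linarith) (by linarith)
      have h3 : cos (π/4) ≤ cos θ := by
        rcases lt_or_eq_of_le hθ.2 with h | h
        · exact (Real.cos_lt_cos_of_nonneg_of_le_pi hθ0.le (by linarith) h).le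
        · rw [h]
      linarith
    have hbnn : 0 ≤ cos η := Real.cos_nonneg_of_mem_Icc ⟨by linarith, hη.2⟩
    have hapos : 0 < cos θ := Real.cos_pos_of_mem_Ioo ⟨by linarith, by linarith⟩
    have hQpos : 0 < Q (θ, η) := by
      rw [hQform (θ, η)]
      have hs1 : 0 < sin θ := Real.sin_pos_of_pos_of_lt_pi hθ0 hθpi
      have hs2 : 0 < sin η := Real.sin_pos_of_pos_of_lt_pi hη0 hηpi
      have f1 : 0 < (cos (θ,η).1 - cos (θ,η).2) * Real.sinh ((y - x) * (cos (θ,η).1 - cos (θ,η).2) / 2) := by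
        apply mul_pos (by simpa using sub_pos.2 hab)
        rw [Real.sinh_pos_iff]
        simp only
        nlinarith
      have f2 : 0 < (cos (θ,η).1 + cos (θ,η).2) * Real.sinh ((y + x) * (cos (θ,η).1 + cos (θ,η).2) / 2) := by
        apply mul_pos (by simp only; linarith)
        rw [Real.sinh_pos_iff]
        simp only
        nlinarith
      have f3 : 0 < sin (θ,η).1 ^ n * sin (θ,η).2 ^ n := by
        simp only
        exact mul_pos (pow_pos hs1 n) (pow_pos hs2 n)
      exact mul_pos (mul_pos (mul_pos (by norm_num) f1) f2) f3
    exact ne_of_gt hQpos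
  have hμsupp : 0 < μ (Function.support Q) := by
    refine lt_of_lt_of_le ?_ (measure_mono hsupp)
    rw [hμ, Measure.prod_prod, hν,
        Measure.restrict_apply measurableSet_Ioc, Measure.restrict_apply measurableSet_Ioc]
    have hpi := pi_pos
    have e1 : Ioc (π/8) (π/4) ∩ Ioc 0 π = Ioc (π/8) (π/4) := by
      apply inter_eq_self_of_subset_left
      apply Ioc_subset_Ioc <;> linarith
    have e2 : Ioc (3*π/8) (π/2) ∩ Ioc 0 π = Ioc (3*π/8) (π/2) := by
      apply inter_eq_self_of_subset_left
      apply Ioc_subset_Ioc <;> linarith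
    rw [e1, e2, Real.volume_Ioc, Real.volume_Ioc]
    apply ENNReal.mul_pos
    · simp only [ne_eq, ENNReal.ofReal_eq_zero, not_le]; linarith
    · simp only [ne_eq, ENNReal.ofReal_eq_zero, not_le]; linarith
  have hpos : 0 < ∫ z, Q z ∂μ :=
    (integral_pos_iff_support_of_nonneg_ae hQnonneg hQint).2 hμsupp
  rw [hQeval] at hpos
  linarith
lemma cos_anti {a b : ℝ} (h0 : 0 ≤ a) (hab : a ≤ b) (hb : b ≤ π) : cos b ≤ cos a := by
  rcases eq_or_lt_of_le hab with h | h
  · rw [h]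
  · exact (Real.cos_lt_cos_of_nonneg_of_le_pi h0 hb h).le

lemma tail (N : ℕ) (hN : 2 ≤ N) {ε : ℝ} (hε : 0 < ε) :
    ∃ x : ℝ, 0 < x ∧ bJ N x < ε * bJ (N - 2) x := by
  have hpi := pi_pos
  set δ : ℝ := min (π/4) (Real.sqrt (ε/2)) with hδdef
  have hδpos : 0 < δ := lt_min (by linarith) (Real.sqrt_pos.2 (by linarith))
  have hδle : δ ≤ π/4 := min_le_left _ _
  have hδsq : δ^2 ≤ ε/2 := by
    have h1 : δ ≤ Real.sqrt (ε/2) := min_le_right _ _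
    have := Real.sq_sqrt (by linarith : (0:ℝ) ≤ ε/2)
    nlinarith [Real.sqrt_nonneg (ε/2)]
  set m : ℝ := ∫ θ in (0:ℝ)..(δ/2), sin θ ^ (N-2) with hm
  have hmpos : 0 < m := by
    rw [hm]
    apply intervalIntegral.intervalIntegral_pos_of_pos_on
    · exact Continuous.intervalIntegrable (by fun_prop) 0 (δ/2)
    · intro θ hθ
      obtain ⟨h1, h2⟩ := hθ
      exact pow_pos (Real.sin_pos_of_pos_of_lt_pi h1 (by linarith)) _
    · linarith
  have hd : 0 < cos (δ/2) - cos δ := by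
    have := Real.cos_lt_cos_of_nonneg_of_le_pi (by linarith : (0:ℝ) ≤ δ/2) (by linarith : δ ≤ π)
      (by linarith : δ/2 < δ)
    linarith
  set d : ℝ := cos (δ/2) - cos δ with hdd
  set x : ℝ := max 1 ((Real.log (2*π/(ε*m)) + 1)/d) with hx
  have hx1 : (1:ℝ) ≤ x := le_max_left _ _
  have hx0 : 0 < x := by linarith
  refine ⟨x, hx0, ?_⟩
  -- key exponential bound
  have hxd : Real.log (2*π/(ε*m)) + 1 ≤ x * d := by
    have h1 : (Real.log (2*π/(ε*m)) + 1)/d ≤ x := le_max_right _ _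
    calc Real.log (2*π/(ε*m)) + 1 = ((Real.log (2*π/(ε*m)) + 1)/d) * d := by field_simp
      _ ≤ x * d := mul_le_mul_of_nonneg_right h1 hd.le
  have hexp : 2*π/(ε*m) < Real.exp (x*d) := by
    calc 2*π/(ε*m) = Real.exp (Real.log (2*π/(ε*m))) := (Real.exp_log (by positivity)).symm
      _ < Real.exp (x*d) := Real.exp_lt_exp.2 (by linarith)
  have hkey : π * Real.exp (x * cos δ) < ε/2 * m * Real.exp (x * cos (δ/2)) := by
    have h2 : π < ε/2 * m * Real.exp (x*d) := by
      rw [div_lt_iff₀ (by positivity)] at hexp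
      calc π = (2*π) / 2 := by ring
        _ < Real.exp (x*d) * (ε*m) / 2 := by linarith
        _ = ε/2 * m * Real.exp (x*d) := by ring
    have h3 : Real.exp (x * cos (δ/2)) = Real.exp (x*d) * Real.exp (x * cos δ) := by
      rw [← Real.exp_add]; congr 1; rw [hdd]; ring
    calc π * Real.exp (x * cos δ) < ε/2 * m * Real.exp (x*d) * Real.exp (x * cos δ) := by
          apply mul_lt_mul_of_pos_right h2 (Real.exp_pos _)
      _ = ε/2 * m * Real.exp (x * cos (δ/2)) := by rw [h3]; ring
  -- lower bound for bJ (N-2) x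
  have hAlow : m * Real.exp (x * cos (δ/2)) ≤ bJ (N-2) x := by
    have hsplit : bJ (N-2) x = (∫ θ in (0:ℝ)..(δ/2), exp (x * cos θ) * sin θ ^ (N-2))
        + ∫ θ in (δ/2)..π, exp (x * cos θ) * sin θ ^ (N-2) := by
      rw [bJ, ← intervalIntegral.integral_add_adjacent_intervals (iiJ (N-2) x 0 (δ/2)) (iiJ (N-2) x (δ/2) π)]
    have h1 : m * Real.exp (x * cos (δ/2)) ≤ ∫ θ in (0:ℝ)..(δ/2), exp (x * cos θ) * sin θ ^ (N-2) := by
      have : (∫ θ in (0:ℝ)..(δ/2), Real.exp (x * cos (δ/2)) * sin θ ^ (N-2))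
          ≤ ∫ θ in (0:ℝ)..(δ/2), exp (x * cos θ) * sin θ ^ (N-2) := by
        apply intervalIntegral.integral_mono_on (by linarith)
          (Continuous.intervalIntegrable (by fun_prop) _ _) (iiJ (N-2) x 0 (δ/2))
        intro θ hθ
        have hc : cos (δ/2) ≤ cos θ := cos_anti hθ.1 hθ.2 (by linarith)
        have hs : (0:ℝ) ≤ sin θ ^ (N-2) :=
          pow_nonneg (Real.sin_nonneg_of_nonneg_of_le_pi hθ.1 (by cases hθ; linarith)) _
        apply mul_le_mul_of_nonneg_right _ hs
        exact Real.exp_le_exp.2 (mul_le_mul_of_nonneg_left hc hx0.le)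
      calc m * Real.exp (x * cos (δ/2))
          = ∫ θ in (0:ℝ)..(δ/2), Real.exp (x * cos (δ/2)) * sin θ ^ (N-2) := by
            rw [hm, mul_comm, ← intervalIntegral.integral_const_mul]
        _ ≤ _ := this
    have h2 : (0:ℝ) ≤ ∫ θ in (δ/2)..π, exp (x * cos θ) * sin θ ^ (N-2) := by
      apply intervalIntegral.integral_nonneg (by linarith)
      intro θ hθ
      have := Real.sin_nonneg_of_nonneg_of_le_pi (by cases hθ; linarith) hθ.2
      positivity
    linarith [hsplit]
  -- upper bound for bJ N x
  have hBsplit : bJ N x = (∫ θ in (0:ℝ)..δ, exp (x * cos θ) * sin θ ^ N)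
      + ∫ θ in δ..π, exp (x * cos θ) * sin θ ^ N := by
    rw [bJ, ← intervalIntegral.integral_add_adjacent_intervals (iiJ N x 0 δ) (iiJ N x δ π)]
  have hB1 : (∫ θ in (0:ℝ)..δ, exp (x * cos θ) * sin θ ^ N)
      ≤ ε/2 * ∫ θ in (0:ℝ)..δ, exp (x * cos θ) * sin θ ^ (N-2) := by
    rw [← intervalIntegral.integral_const_mul]
    apply intervalIntegral.integral_mono_on (by linarith) (iiJ N x 0 δ)
      (Continuous.intervalIntegrable (by fun_prop) _ _)
    intro θ hθ
    have hsn : 0 ≤ sin θ := Real.sin_nonneg_of_nonneg_of_le_pi hθ.1 (by cases hθ; linarith)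
    have hss : sin θ ^ 2 ≤ ε/2 := by
      have h1 : sin θ ≤ θ := Real.sin_le hθ.1
      nlinarith [hθ.2, hθ.1]
    have hpow : sin θ ^ N = sin θ ^ (N-2) * sin θ ^ 2 := by
      rw [← pow_add]; congr 1; omega
    rw [hpow]
    have he : (0:ℝ) < exp (x * cos θ) := Real.exp_pos _
    have hsp : (0:ℝ) ≤ sin θ ^ (N-2) := pow_nonneg hsn _
    calc exp (x * cos θ) * (sin θ ^ (N-2) * sin θ ^ 2)
        ≤ exp (x * cos θ) * (sin θ ^ (N-2) * (ε/2)) := by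
          apply mul_le_mul_of_nonneg_left _ he.le
          exact mul_le_mul_of_nonneg_left hss hsp
      _ = ε/2 * (exp (x * cos θ) * sin θ ^ (N-2)) := by ring
  have hB1' : (∫ θ in (0:ℝ)..δ, exp (x * cos θ) * sin θ ^ (N-2)) ≤ bJ (N-2) x := by
    have hsplit : bJ (N-2) x = (∫ θ in (0:ℝ)..δ, exp (x * cos θ) * sin θ ^ (N-2))
        + ∫ θ in δ..π, exp (x * cos θ) * sin θ ^ (N-2) := by
      rw [bJ, ← intervalIntegral.integral_add_adjacent_intervals (iiJ (N-2) x 0 δ) (iiJ (N-2) x δ π)]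
    have h2 : (0:ℝ) ≤ ∫ θ in δ..π, exp (x * cos θ) * sin θ ^ (N-2) := by
      apply intervalIntegral.integral_nonneg (by linarith)
      intro θ hθ
      have := Real.sin_nonneg_of_nonneg_of_le_pi (by cases hθ; linarith) hθ.2
      positivity
    linarith
  have hB2 : (∫ θ in δ..π, exp (x * cos θ) * sin θ ^ N) ≤ π * Real.exp (x * cos δ) := by
    have h1 : (∫ θ in δ..π, exp (x * cos θ) * sin θ ^ N)
        ≤ ∫ θ in δ..π, Real.exp (x * cos δ) := by
      apply intervalIntegral.integral_mono_on (by linarith) (iiJ N x δ π)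
        (intervalIntegrable_const)
      intro θ hθ
      have hsn : 0 ≤ sin θ := Real.sin_nonneg_of_nonneg_of_le_pi (by cases hθ; linarith) hθ.2
      have hs1 : sin θ ^ N ≤ 1 := pow_le_one₀ hsn (Real.sin_le_one θ)
      have hc : cos θ ≤ cos δ := cos_anti (by linarith) hθ.1 hθ.2
      have he : Real.exp (x * cos θ) ≤ Real.exp (x * cos δ) :=
        Real.exp_le_exp.2 (mul_le_mul_of_nonneg_left hc hx0.le)
      calc exp (x * cos θ) * sin θ ^ N ≤ exp (x * cos θ) * 1 := by
            apply mul_le_mul_of_nonneg_left hs1 (Real.exp_pos _).le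
        _ = exp (x * cos θ) := mul_one _
        _ ≤ Real.exp (x * cos δ) := he
    have h2 : (∫ θ in δ..π, Real.exp (x * cos δ)) = (π - δ) * Real.exp (x * cos δ) := by
      rw [intervalIntegral.integral_const, smul_eq_mul]
    have h3 : (π - δ) * Real.exp (x * cos δ) ≤ π * Real.exp (x * cos δ) := by
      apply mul_le_mul_of_nonneg_right (by linarith) (Real.exp_pos _).le
    linarith
  -- combine
  have hApos : 0 < bJ (N-2) x := lt_of_lt_of_le (by positivity) hAlow
  calc bJ N x ≤ ε/2 * (∫ θ in (0:ℝ)..δ, exp (x * cos θ) * sin θ ^ (N-2)) + π * Real.exp (x * cos δ) := by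
        linarith [hBsplit, hB1, hB2]
    _ ≤ ε/2 * bJ (N-2) x + π * Real.exp (x * cos δ) := by
        have := mul_le_mul_of_nonneg_left hB1' (by linarith : (0:ℝ) ≤ ε/2)
        linarith
    _ < ε/2 * bJ (N-2) x + ε/2 * m * Real.exp (x * cos (δ/2)) := by linarith
    _ ≤ ε/2 * bJ (N-2) x + ε/2 * bJ (N-2) x := by
        have h := mul_le_mul_of_nonneg_left hAlow (by linarith : (0:ℝ) ≤ ε/2)
        nlinarith [hAlow]
    _ = ε * bJ (N-2) x := by ring


/-- The ratio `I_{N/2}(x) / I_{N/2-1}(x)` of modified Bessel functions of the first kind,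
expressed via the integral representation
`f(x) = (x/(N-1)) * (∫₀^π e^{x cos θ} sin^N θ dθ) / (∫₀^π e^{x cos θ} sin^{N-2} θ dθ)`. -/
def besselRatio (N : ℕ) (x : ℝ) : ℝ :=
  x / ((N : ℝ) - 1) *
      (∫ θ in (0:ℝ)..π, Real.exp (x * Real.cos θ) * Real.sin θ ^ N) /
    ∫ θ in (0:ℝ)..π, Real.exp (x * Real.cos θ) * Real.sin θ ^ (N - 2)

/-- For `N ≥ 2` and `β > N` there is a unique strictly positive solution of `x = β f(x)`. -/
theorem unique_positive_fixed_point (N : ℕ) (hN : 2 ≤ N) (β : ℝ) (hβ : (N : ℝ) < β) :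
    ∃! x : ℝ, 0 < x ∧ x = β * besselRatio N x := by
  have hNr : (2:ℝ) ≤ (N:ℝ) := by exact_mod_cast hN
  have hd0 : (0:ℝ) < (N:ℝ) - 1 := by linarith
  have hβ0 : (0:ℝ) < β := by linarith
  set c : ℝ := (β - ((N:ℝ) - 1)) / β with hc
  have hc1 : 1/(N:ℝ) < c := by
    rw [hc, div_lt_div_iff₀ (by linarith) hβ0]
    nlinarith
  have hc2 : c < 1 := by
    rw [hc, div_lt_one hβ0]; linarith
  have hbr : ∀ x : ℝ, besselRatio N x = x / ((N:ℝ)-1) * bJ N x / bJ (N-2) x := fun x => rfl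
  have equiv : ∀ x : ℝ, 0 < x → ((x = β * besselRatio N x) ↔ bK (N-2) x = c * bJ (N-2) x) := by
    intro x hx
    have hA := bJ_pos (N-2) x
    have hsplit := bJ_split N hN x
    rw [hbr x]
    have hB := bJ_pos N x
    have hmain : (x = β * (x / ((N:ℝ)-1) * bJ N x / bJ (N-2) x)) ↔
        β * bJ N x = ((N:ℝ)-1) * bJ (N-2) x := by
      constructor
      · intro h
        have h1 : x * (β * bJ N x) = x * (((N:ℝ)-1) * bJ (N-2) x) := by
          field_simp at h
          linear_combination (-x) * h
        exact mul_left_cancel₀ (ne_of_gt hx) h1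
      · intro h
        field_simp
        linear_combination -h
    rw [hmain]
    constructor
    · intro h
      rw [hc, div_mul_eq_mul_div, eq_div_iff (ne_of_gt hβ0)]
      nlinarith [hsplit]
    · intro h
      rw [hc, div_mul_eq_mul_div, eq_div_iff (ne_of_gt hβ0)] at h
      nlinarith [hsplit]
  set g : ℝ → ℝ := fun x => bK (N-2) x - c * bJ (N-2) x with hg
  have hgcont : Continuous g := (bK_cont (N-2)).sub (continuous_const.mul (bJ_cont (N-2)))
  have hg0 : g 0 < 0 := by
    have h1 := bK_zero N hN
    have h2 := bJ_pos (N-2) 0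
    simp only [hg]
    nlinarith
  obtain ⟨x₁, hx₁pos, htail⟩ := tail N hN (by linarith : (0:ℝ) < 1 - c)
  have hgx₁ : 0 < g x₁ := by
    have hsplit := bJ_split N hN x₁
    simp only [hg]
    nlinarith
  have hIVT := intermediate_value_Ioo (le_of_lt hx₁pos) hgcont.continuousOn
  have h0mem : (0:ℝ) ∈ Ioo (g 0) (g x₁) := ⟨hg0, hgx₁⟩
  obtain ⟨ξ, hξmem, hξ⟩ := hIVT h0mem
  have hξroot : bK (N-2) ξ = c * bJ (N-2) ξ := by
    have : bK (N-2) ξ - c * bJ (N-2) ξ = 0 := hξ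
    linarith
  refine ⟨ξ, ⟨hξmem.1, (equiv ξ hξmem.1).2 hξroot⟩, ?_⟩
  rintro y ⟨hy0, hyeq⟩
  have hyroot : bK (N-2) y = c * bJ (N-2) y := (equiv y hy0).1 hyeq
  by_contra hne
  rcases lt_or_gt_of_ne hne with h | h
  · have := mono_key (N-2) hy0.le h
    rw [hyroot, hξroot] at this
    nlinarith
  · have := mono_key (N-2) hξmem.1.le h
    rw [hyroot, hξroot] at this
    nlinarith

end
end

section
/- The function x ↦ f(x)/x satisfies lim_{x→0⁺} f(x)/x = 1/N and lim_{x→∞} f(x)/x = 0. -/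
open MeasureTheory Real Filter

noncomputable section

lemma besselCont (k : ℕ) :
    Continuous fun x : ℝ => ∫ θ in (0:ℝ)..π, Real.exp (x * Real.cos θ) * Real.sin θ ^ k := by
  apply intervalIntegral.continuous_parametric_intervalIntegral_of_continuous' (μ := volume)
  fun_prop

lemma besselContC (k : ℕ) :
    Continuous fun x : ℝ =>
      ∫ θ in (0:ℝ)..π, Real.exp (x * Real.cos θ) * Real.sin θ ^ k * Real.cos θ := by
  apply intervalIntegral.continuous_parametric_intervalIntegral_of_continuous' (μ := volume)
  fun_prop

lemma besselPos (k : ℕ) (x : ℝ) :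
    0 < ∫ θ in (0:ℝ)..π, Real.exp (x * Real.cos θ) * Real.sin θ ^ k := by
  apply intervalIntegral.intervalIntegral_pos_of_pos_on
  · exact (by fun_prop : Continuous fun θ : ℝ => Real.exp (x * Real.cos θ) * Real.sin θ ^ k).intervalIntegrable _ _
  · intro θ hθ
    exact mul_pos (Real.exp_pos _) (pow_pos (Real.sin_pos_of_pos_of_lt_pi hθ.1 hθ.2) k)
  · exact Real.pi_pos

lemma besselIBP (N : ℕ) (hN : 2 ≤ N) {x : ℝ} (hx : x ≠ 0) :
    (∫ θ in (0:ℝ)..π, Real.exp (x * Real.cos θ) * Real.sin θ ^ N)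
      = (((N : ℝ) - 1) / x) *
        ∫ θ in (0:ℝ)..π, Real.exp (x * Real.cos θ) * Real.sin θ ^ (N - 2) * Real.cos θ := by
  have hcast : ((N - 1 : ℕ) : ℝ) = (N : ℝ) - 1 := by
    have : 1 ≤ N := by omega
    push_cast [Nat.cast_sub this]; ring
  have key : ∀ θ : ℝ,
      HasDerivAt (fun θ => (-(1/x)) * (Real.exp (x * Real.cos θ) * Real.sin θ ^ (N - 1)))
        (Real.exp (x * Real.cos θ) * Real.sin θ ^ N
          - (((N : ℝ) - 1) / x) * (Real.exp (x * Real.cos θ) * Real.sin θ ^ (N - 2) * Real.cos θ)) θ := by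
    intro θ
    have h1 : HasDerivAt (fun θ : ℝ => x * Real.cos θ) (x * (-Real.sin θ)) θ :=
      (Real.hasDerivAt_cos θ).const_mul x
    have hexp := h1.exp
    have h2 : HasDerivAt (fun θ : ℝ => Real.sin θ ^ (N - 1))
        ((N - 1 : ℕ) * Real.sin θ ^ (N - 1 - 1) * Real.cos θ) θ := by
        simpa using (Real.hasDerivAt_sin θ).fun_pow (N - 1)
    have h3 := (hexp.fun_mul h2).const_mul (-(1/x))
    refine h3.congr_deriv ?_
    have e1 : N - 1 - 1 = N - 2 := by omega
    have e2 : Real.sin θ ^ N = Real.sin θ ^ (N - 1) * Real.sin θ := by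
      rw [← pow_succ]; congr 1; omega
    rw [e1, hcast, e2]
    field_simp
    ring
  have hint : IntervalIntegrable (fun θ =>
      Real.exp (x * Real.cos θ) * Real.sin θ ^ N
        - (((N : ℝ) - 1) / x) * (Real.exp (x * Real.cos θ) * Real.sin θ ^ (N - 2) * Real.cos θ))
      volume 0 π := by
    apply Continuous.intervalIntegrable; fun_prop
  have := intervalIntegral.integral_eq_sub_of_hasDerivAt (fun θ _ => key θ) hint
  have hend : ((-(1/x)) * (Real.exp (x * Real.cos π) * Real.sin π ^ (N - 1)))
      - ((-(1/x)) * (Real.exp (x * Real.cos 0) * Real.sin 0 ^ (N - 1))) = 0 := by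
    have h1 : 1 ≤ N - 1 := by omega
    rw [Real.sin_pi, Real.sin_zero, zero_pow (by omega : N - 1 ≠ 0)]
    ring
  rw [hend] at this
  rw [intervalIntegral.integral_sub (by apply Continuous.intervalIntegrable; fun_prop)
    (by apply Continuous.intervalIntegrable; fun_prop), intervalIntegral.integral_const_mul] at this
  linarith

/-- `f(x)/x → 1/N` as `x → 0⁺` and `f(x)/x → 0` as `x → ∞`. -/
theorem besselRatio_div_limits (N : ℕ) (hN : 2 ≤ N) :
    Tendsto (fun x => besselRatio N x / x) (nhdsWithin 0 (Set.Ioi 0))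
        (nhds (1 / (N : ℝ))) ∧
      Tendsto (fun x => besselRatio N x / x) atTop (nhds 0) := by
  set A : ℝ → ℝ := fun x => ∫ θ in (0:ℝ)..π, Real.exp (x * Real.cos θ) * Real.sin θ ^ N with hA
  set B : ℝ → ℝ := fun x => ∫ θ in (0:ℝ)..π, Real.exp (x * Real.cos θ) * Real.sin θ ^ (N - 2)
    with hBdef
  set C : ℝ → ℝ := fun x =>
    ∫ θ in (0:ℝ)..π, Real.exp (x * Real.cos θ) * Real.sin θ ^ (N - 2) * Real.cos θ with hCdef
  have hBpos : ∀ x, 0 < B x := besselPos (N - 2)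
  have hc : (0:ℝ) < (N : ℝ) - 1 := by
    have : (2:ℝ) ≤ (N : ℝ) := by exact_mod_cast hN
    linarith
  have hfx : ∀ x : ℝ, x ≠ 0 → besselRatio N x / x = A x / (((N : ℝ) - 1) * B x) := by
    intro x hx
    have hB := (hBpos x).ne'
    rw [besselRatio]
    change x / ((N:ℝ) - 1) * A x / B x / x = A x / (((N : ℝ) - 1) * B x)
    field_simp
  constructor
  · -- limit at 0⁺
    have hval : A 0 / (((N : ℝ) - 1) * B 0) = 1 / (N : ℝ) := by
      obtain ⟨m, rfl⟩ : ∃ m, N = m + 2 := ⟨N - 2, by omega⟩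
      have hA0 : A 0 = ∫ θ in (0:ℝ)..π, Real.sin θ ^ (m + 2) := by simp [hA]
      have hB0 : B 0 = ∫ θ in (0:ℝ)..π, Real.sin θ ^ m := by simp [hBdef]
      have hB0pos : (0:ℝ) < ∫ θ in (0:ℝ)..π, Real.sin θ ^ m := by
        rw [← hB0]; exact hBpos 0
      rw [hA0, hB0, integral_sin_pow m]
      rw [Real.sin_zero, Real.sin_pi, zero_pow (by omega : m + 1 ≠ 0)]
      have h1 : (0:ℝ) < (m:ℝ) + 2 := by positivity
      have h2 : (0:ℝ) < (m:ℝ) + 1 := by positivity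
      push_cast
      have hden : (0:ℝ) < ((m:ℝ) + 2 - 1) * ∫ x in (0:ℝ)..π, Real.sin x ^ m := by
        apply mul_pos; linarith; exact hB0pos
      rw [div_eq_div_iff hden.ne' h1.ne']
      field_simp
      ring
    have hFt : Tendsto (fun x => A x / (((N : ℝ) - 1) * B x)) (nhds 0)
        (nhds (A 0 / (((N : ℝ) - 1) * B 0))) :=
      ((besselCont _).tendsto 0).div ((continuous_const.mul (besselCont _)).tendsto 0)
        (ne_of_gt (mul_pos hc (hBpos 0)))
    rw [hval] at hFt
    apply (hFt.mono_left nhdsWithin_le_nhds).congr'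
    filter_upwards [self_mem_nhdsWithin] with x hx
    exact (hfx x (ne_of_gt hx)).symm
  · -- limit at ∞
    have hCB : ∀ x : ℝ, |C x| ≤ B x := by
      intro x
      refine (intervalIntegral.abs_integral_le_integral_abs Real.pi_pos.le).trans ?_
      apply intervalIntegral.integral_mono_on Real.pi_pos.le
      · exact ((by fun_prop : Continuous fun θ : ℝ =>
          Real.exp (x * Real.cos θ) * Real.sin θ ^ (N - 2) * Real.cos θ).abs).intervalIntegrable _ _
      · exact (by fun_prop : Continuous fun θ : ℝ =>
          Real.exp (x * Real.cos θ) * Real.sin θ ^ (N - 2)).intervalIntegrable _ _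
      · intro θ hθ
        have hs : 0 ≤ Real.sin θ := Real.sin_nonneg_of_nonneg_of_le_pi hθ.1 hθ.2
        have h1 : 0 ≤ Real.exp (x * Real.cos θ) * Real.sin θ ^ (N - 2) :=
          mul_nonneg (Real.exp_pos _).le (pow_nonneg hs _)
        calc |Real.exp (x * Real.cos θ) * Real.sin θ ^ (N - 2) * Real.cos θ|
            = (Real.exp (x * Real.cos θ) * Real.sin θ ^ (N - 2)) * |Real.cos θ| := by
              rw [abs_mul, abs_of_nonneg h1]
          _ ≤ (Real.exp (x * Real.cos θ) * Real.sin θ ^ (N - 2)) * 1 :=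
              mul_le_mul_of_nonneg_left (abs_cos_le_one θ) h1
          _ = _ := mul_one _
    apply squeeze_zero_norm' (a := fun x : ℝ => 1 / x)
    · filter_upwards [eventually_gt_atTop (0:ℝ)] with x hx
      have hx' : x ≠ 0 := ne_of_gt hx
      have hAC : A x = ((N : ℝ) - 1) / x * C x := besselIBP N hN hx'
      rw [Real.norm_eq_abs, hfx x hx', hAC]
      have : ((N : ℝ) - 1) / x * C x / (((N : ℝ) - 1) * B x) = C x / (x * B x) := by
        field_simp [hc.ne', (hBpos x).ne']
      rw [this, abs_div, abs_of_pos (mul_pos hx (hBpos x)), div_le_div_iff₀ (mul_pos hx (hBpos x)) hx]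
      calc |C x| * x ≤ B x * x := mul_le_mul_of_nonneg_right (hCB x) hx.le
        _ = 1 * (x * B x) := by ring
    · simpa using tendsto_inv_atTop_zero (𝕜 := ℝ)


end
end

section
/- For every x > 0, one has 0 < f′(x) < 1/(N−1) ≤ 1, where f′ denotes the derivative of f. -/
open MeasureTheory Real
open Set

noncomputable section


def Jf (φ : ℝ → ℝ) (y : ℝ) : ℝ := ∫ θ in (0:ℝ)..π, Real.exp (y * Real.cos θ) * φ θ

lemma Jf_cont_integrand (φ : ℝ → ℝ) (hφ : Continuous φ) (y : ℝ) :
    Continuous fun θ => Real.exp (y * Real.cos θ) * φ θ :=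
  (Real.continuous_exp.comp (continuous_const.mul Real.continuous_cos)).mul hφ

lemma Jf_intble (φ : ℝ → ℝ) (hφ : Continuous φ) (y a b : ℝ) :
    IntervalIntegrable (fun θ => Real.exp (y * Real.cos θ) * φ θ) volume a b :=
  (Jf_cont_integrand φ hφ y).intervalIntegrable _ _

lemma Jf_congr {φ1 φ2 : ℝ → ℝ} (h : ∀ θ, φ1 θ = φ2 θ) (y : ℝ) : Jf φ1 y = Jf φ2 y := by
  rw [funext h]

lemma Jf_add (φ1 φ2 : ℝ → ℝ) (h1 : Continuous φ1) (h2 : Continuous φ2) (y : ℝ) :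
    Jf (fun θ => φ1 θ + φ2 θ) y = Jf φ1 y + Jf φ2 y := by
  unfold Jf
  rw [← intervalIntegral.integral_add (Jf_intble φ1 h1 y 0 π) (Jf_intble φ2 h2 y 0 π)]
  congr 1; funext θ; ring

lemma Jf_sub (φ1 φ2 : ℝ → ℝ) (h1 : Continuous φ1) (h2 : Continuous φ2) (y : ℝ) :
    Jf (fun θ => φ1 θ - φ2 θ) y = Jf φ1 y - Jf φ2 y := by
  unfold Jf
  rw [← intervalIntegral.integral_sub (Jf_intble φ1 h1 y 0 π) (Jf_intble φ2 h2 y 0 π)]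
  congr 1; funext θ; ring

lemma Jf_const_mul (φ : ℝ → ℝ) (c y : ℝ) :
    Jf (fun θ => c * φ θ) y = c * Jf φ y := by
  unfold Jf
  rw [← intervalIntegral.integral_const_mul]
  congr 1; funext θ; ring

lemma Jf_nonneg (φ : ℝ → ℝ) (hnn : ∀ θ ∈ Icc (0:ℝ) π, 0 ≤ φ θ) (y : ℝ) : 0 ≤ Jf φ y :=
  intervalIntegral.integral_nonneg pi_pos.le
    (fun θ hθ => mul_nonneg (Real.exp_pos _).le (hnn θ hθ))

lemma Jf_pos (φ : ℝ → ℝ) (hφ : Continuous φ) (hnn : ∀ θ ∈ Icc (0:ℝ) π, 0 ≤ φ θ)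
    (a b : ℝ) (h0a : 0 ≤ a) (hab : a < b) (hbπ : b ≤ π)
    (hpos : ∀ θ ∈ Ioo a b, 0 < φ θ) (y : ℝ) : 0 < Jf φ y := by
  have e1 : Jf φ y = (∫ θ in (0:ℝ)..a, Real.exp (y * Real.cos θ) * φ θ)
      + ((∫ θ in a..b, Real.exp (y * Real.cos θ) * φ θ)
      + (∫ θ in b..π, Real.exp (y * Real.cos θ) * φ θ)) := by
    unfold Jf
    rw [intervalIntegral.integral_add_adjacent_intervals (Jf_intble φ hφ y a b)
      (Jf_intble φ hφ y b π),
      intervalIntegral.integral_add_adjacent_intervals (Jf_intble φ hφ y 0 a)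
      (Jf_intble φ hφ y a π)]
  have h2 : 0 < ∫ θ in a..b, Real.exp (y * Real.cos θ) * φ θ :=
    intervalIntegral.intervalIntegral_pos_of_pos_on (Jf_intble φ hφ y a b)
      (fun θ hθ => mul_pos (Real.exp_pos _) (hpos θ hθ)) hab
  have h1 : 0 ≤ ∫ θ in (0:ℝ)..a, Real.exp (y * Real.cos θ) * φ θ :=
    intervalIntegral.integral_nonneg h0a (fun θ hθ =>
      mul_nonneg (Real.exp_pos _).le
        (hnn θ ⟨hθ.1, le_trans hθ.2 (le_trans hab.le hbπ)⟩))
  have h3 : 0 ≤ ∫ θ in b..π, Real.exp (y * Real.cos θ) * φ θ :=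
    intervalIntegral.integral_nonneg hbπ (fun θ hθ =>
      mul_nonneg (Real.exp_pos _).le
        (hnn θ ⟨le_trans (le_trans h0a hab.le) hθ.1, hθ.2⟩))
  linarith

lemma Jf_hasDerivAt (φ : ℝ → ℝ) (hφ : Continuous φ) (y : ℝ) :
    HasDerivAt (Jf φ) (Jf (fun θ => Real.cos θ * φ θ) y) y := by
  have key := intervalIntegral.hasDerivAt_integral_of_dominated_loc_of_deriv_le
    (μ := volume) (a := (0:ℝ)) (b := π)
    (F := fun x θ => Real.exp (x * Real.cos θ) * φ θ)
    (F' := fun x θ => Real.exp (x * Real.cos θ) * (Real.cos θ * φ θ))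
    (x₀ := y) (bound := fun θ => Real.exp (|y| + 1) * |φ θ|) (Metric.ball_mem_nhds y one_pos)
    ?_ ?_ ?_ ?_ ?_ ?_
  · exact key.2
  · filter_upwards with x using (Jf_cont_integrand φ hφ x).aestronglyMeasurable
  · exact ((Jf_cont_integrand φ hφ y)).intervalIntegrable _ _
  · exact (Jf_cont_integrand (fun θ => Real.cos θ * φ θ)
      (Real.continuous_cos.mul hφ) y).aestronglyMeasurable
  · filter_upwards with θ _ x hx
    have h1 : |Real.cos θ| ≤ 1 := Real.abs_cos_le_one θ
    have hxy : |x| ≤ |y| + 1 := by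
      have := abs_sub_abs_le_abs_sub x y
      have := mem_ball_iff_norm.mp hx
      simp only [Real.norm_eq_abs] at this
      linarith
    have hle : x * Real.cos θ ≤ |y| + 1 := by
      calc x * Real.cos θ ≤ |x * Real.cos θ| := le_abs_self _
        _ = |x| * |Real.cos θ| := abs_mul _ _
        _ ≤ (|y| + 1) * 1 := mul_le_mul hxy h1 (abs_nonneg _) (by positivity)
        _ = |y| + 1 := mul_one _
    calc ‖Real.exp (x * Real.cos θ) * (Real.cos θ * φ θ)‖
        = Real.exp (x * Real.cos θ) * (|Real.cos θ| * |φ θ|) := by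
          rw [Real.norm_eq_abs, abs_mul, abs_mul, Real.abs_exp]
      _ ≤ Real.exp (|y| + 1) * (1 * |φ θ|) := by
          apply mul_le_mul (Real.exp_le_exp.mpr hle)
            (mul_le_mul_of_nonneg_right h1 (abs_nonneg _)) (by positivity)
            (Real.exp_pos _).le
      _ = Real.exp (|y| + 1) * |φ θ| := by ring
  · exact ((continuous_const.mul hφ.abs)).intervalIntegrable _ _
  · filter_upwards with θ _ x _
    have h : HasDerivAt (fun x : ℝ => x * Real.cos θ) (Real.cos θ) x := by
      simpa using (hasDerivAt_id x).mul_const (Real.cos θ)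
    have := (h.exp).mul_const (φ θ)
    simpa [mul_comm, mul_left_comm, mul_assoc] using this

lemma ftc_zero (Ψ ψ : ℝ → ℝ) (hΨ : ∀ θ, HasDerivAt Ψ (ψ θ) θ) (hψ : Continuous ψ)
    (h0 : Ψ 0 = Ψ π) : (∫ θ in (0:ℝ)..π, ψ θ) = 0 := by
  rw [intervalIntegral.integral_eq_sub_of_hasDerivAt (fun t _ => hΨ t)
    (hψ.intervalIntegrable _ _), h0, sub_self]



lemma Jf_sub_mul (φ1 φ2 : ℝ → ℝ) (h1 : Continuous φ1) (h2 : Continuous φ2) (c1 c2 y : ℝ) :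
    Jf (fun θ => c1 * φ1 θ - c2 * φ2 θ) y = c1 * Jf φ1 y - c2 * Jf φ2 y := by
  calc Jf (fun θ => c1 * φ1 θ - c2 * φ2 θ) y
      = Jf (fun θ => c1 * φ1 θ) y - Jf (fun θ => c2 * φ2 θ) y :=
        Jf_sub _ _ (continuous_const.mul h1) (continuous_const.mul h2) y
    _ = c1 * Jf φ1 y - c2 * Jf φ2 y := by rw [Jf_const_mul, Jf_const_mul]

lemma Jf_comb3 (φ1 φ2 φ3 : ℝ → ℝ) (h1 : Continuous φ1) (h2 : Continuous φ2)
    (h3 : Continuous φ3) (c1 c2 c3 y : ℝ) :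
    Jf (fun θ => c1 * φ1 θ - c2 * φ2 θ - c3 * φ3 θ) y
      = c1 * Jf φ1 y - c2 * Jf φ2 y - c3 * Jf φ3 y := by
  calc Jf (fun θ => c1 * φ1 θ - c2 * φ2 θ - c3 * φ3 θ) y
      = Jf (fun θ => c1 * φ1 θ - c2 * φ2 θ) y - Jf (fun θ => c3 * φ3 θ) y :=
        Jf_sub _ _ ((continuous_const.mul h1).sub (continuous_const.mul h2))
          (continuous_const.mul h3) y
    _ = c1 * Jf φ1 y - c2 * Jf φ2 y - c3 * Jf φ3 y := by
        rw [Jf_sub_mul φ1 φ2 h1 h2 c1 c2 y, Jf_const_mul]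

lemma identC (N : ℕ) (hN : 2 ≤ N) (y : ℝ) :
    ((N:ℝ) - 1) * Jf (fun θ => Real.cos θ * Real.sin θ ^ (N-2)) y
      = y * Jf (fun θ => Real.sin θ ^ N) y := by
  have hder : ∀ θ : ℝ, HasDerivAt (fun t => Real.exp (y * Real.cos t) * Real.sin t ^ (N-1))
      (Real.exp (y * Real.cos θ) *
        (((N:ℝ)-1) * (Real.cos θ * Real.sin θ ^ (N-2)) - y * Real.sin θ ^ N)) θ := by
    intro θ
    have h1 : HasDerivAt (fun t => Real.exp (y * Real.cos t))
        (Real.exp (y * Real.cos θ) * (y * -Real.sin θ)) θ :=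
      ((Real.hasDerivAt_cos θ).const_mul y).exp
    have h2 : HasDerivAt (fun t => Real.sin t ^ (N-1))
        (((N-1 : ℕ):ℝ) * Real.sin θ ^ (N-1-1) * Real.cos θ) θ :=
      (Real.hasDerivAt_sin θ).pow (N-1)
    have h3 := h1.mul h2
    refine h3.congr_deriv ?_
    have e1 : N-1-1 = N-2 := by omega
    have e2 : Real.sin θ ^ N = Real.sin θ ^ (N-1) * Real.sin θ := by
      rw [← pow_succ, show N-1+1 = N from by omega]
    have e3 : ((N-1:ℕ):ℝ) = (N:ℝ) - 1 := by
      push_cast [Nat.cast_sub (show 1 ≤ N by omega)]; ring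
    rw [e1, e2, e3]; ring
  have h0 : (fun t => Real.exp (y * Real.cos t) * Real.sin t ^ (N-1)) 0
      = (fun t => Real.exp (y * Real.cos t) * Real.sin t ^ (N-1)) π := by
    simp [Real.sin_pi, zero_pow (show N-1 ≠ 0 by omega)]
  have hz : Jf (fun θ => ((N:ℝ)-1) * (Real.cos θ * Real.sin θ ^ (N-2))
      - y * Real.sin θ ^ N) y = 0 := ftc_zero _ _ hder (by fun_prop) h0
  rw [Jf_sub_mul (fun θ => Real.cos θ * Real.sin θ ^ (N-2)) (fun θ => Real.sin θ ^ N)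
    (by fun_prop) (by fun_prop) (((N:ℝ)-1)) y y] at hz
  linarith

lemma identD (N : ℕ) (hN : 2 ≤ N) (y : ℝ) :
    ((N:ℝ) - 1) * Jf (fun θ => Real.cos θ ^ 2 * Real.sin θ ^ (N-2)) y
      = Jf (fun θ => Real.sin θ ^ N) y
        + y * Jf (fun θ => Real.cos θ * Real.sin θ ^ N) y := by
  have hder : ∀ θ : ℝ, HasDerivAt
      (fun t => Real.exp (y * Real.cos t) * (Real.cos t * Real.sin t ^ (N-1)))
      (Real.exp (y * Real.cos θ) *
        (((N:ℝ)-1) * (Real.cos θ ^ 2 * Real.sin θ ^ (N-2)) - 1 * Real.sin θ ^ N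
          - y * (Real.cos θ * Real.sin θ ^ N))) θ := by
    intro θ
    have h1 : HasDerivAt (fun t => Real.exp (y * Real.cos t))
        (Real.exp (y * Real.cos θ) * (y * -Real.sin θ)) θ :=
      ((Real.hasDerivAt_cos θ).const_mul y).exp
    have h2 : HasDerivAt (fun t => Real.cos t * Real.sin t ^ (N-1))
        (-Real.sin θ * Real.sin θ ^ (N-1)
          + Real.cos θ * (((N-1 : ℕ):ℝ) * Real.sin θ ^ (N-1-1) * Real.cos θ)) θ :=
      (Real.hasDerivAt_cos θ).mul ((Real.hasDerivAt_sin θ).pow (N-1))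
    have h3 := h1.mul h2
    refine h3.congr_deriv ?_
    have e1 : N-1-1 = N-2 := by omega
    have e2 : Real.sin θ ^ N = Real.sin θ ^ (N-1) * Real.sin θ := by
      rw [← pow_succ, show N-1+1 = N from by omega]
    have e3 : ((N-1:ℕ):ℝ) = (N:ℝ) - 1 := by
      push_cast [Nat.cast_sub (show 1 ≤ N by omega)]; ring
    rw [e1, e2, e3]; ring
  have h0 : (fun t => Real.exp (y * Real.cos t) * (Real.cos t * Real.sin t ^ (N-1))) 0
      = (fun t => Real.exp (y * Real.cos t) * (Real.cos t * Real.sin t ^ (N-1))) π := by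
    simp [Real.sin_pi, zero_pow (show N-1 ≠ 0 by omega)]
  have hz : Jf (fun θ => ((N:ℝ)-1) * (Real.cos θ ^ 2 * Real.sin θ ^ (N-2))
      - 1 * Real.sin θ ^ N - y * (Real.cos θ * Real.sin θ ^ N)) y = 0 :=
    ftc_zero _ _ hder (by fun_prop) h0
  rw [Jf_comb3 (fun θ => Real.cos θ ^ 2 * Real.sin θ ^ (N-2)) (fun θ => Real.sin θ ^ N)
    (fun θ => Real.cos θ * Real.sin θ ^ N) (by fun_prop) (by fun_prop) (by fun_prop)
    (((N:ℝ)-1)) 1 y y] at hz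
  linarith

lemma K0 (k : ℕ) : Jf (fun θ => Real.cos θ * Real.sin θ ^ k) 0 = 0 := by
  have hder : ∀ θ : ℝ, HasDerivAt (fun t => Real.sin t ^ (k+1) / ((k:ℝ)+1))
      (Real.exp (0 * Real.cos θ) * (Real.cos θ * Real.sin θ ^ k)) θ := by
    intro θ
    have h2 : HasDerivAt (fun t => Real.sin t ^ (k+1))
        (((k+1 : ℕ):ℝ) * Real.sin θ ^ (k+1-1) * Real.cos θ) θ :=
      (Real.hasDerivAt_sin θ).pow (k+1)
    have h3 := h2.div_const ((k:ℝ)+1)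
    refine h3.congr_deriv ?_
    have hk : ((k:ℝ)+1) ≠ 0 := by positivity
    simp only [Nat.add_sub_cancel, zero_mul, Real.exp_zero, one_mul]
    push_cast
    field_simp
  exact ftc_zero _ _ hder (by fun_prop) (by simp [Real.sin_pi])

lemma JB_pos (N : ℕ) (y : ℝ) : 0 < Jf (fun θ => Real.sin θ ^ (N-2)) y := by
  refine Jf_pos _ (by fun_prop) ?_ 0 π le_rfl pi_pos le_rfl ?_ y
  · exact fun θ hθ => pow_nonneg (Real.sin_nonneg_of_nonneg_of_le_pi hθ.1 hθ.2) _
  · exact fun θ hθ => pow_pos (Real.sin_pos_of_pos_of_lt_pi hθ.1 hθ.2) _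

lemma JD_pos (N : ℕ) (y : ℝ) :
    0 < Jf (fun θ => Real.cos θ ^ 2 * Real.sin θ ^ (N-2)) y := by
  refine Jf_pos _ (by fun_prop) ?_ 0 (π/2) le_rfl (by positivity) (by linarith [pi_pos]) ?_ y
  · exact fun θ hθ => mul_nonneg (sq_nonneg _)
      (pow_nonneg (Real.sin_nonneg_of_nonneg_of_le_pi hθ.1 hθ.2) _)
  · intro θ hθ
    have hc : 0 < Real.cos θ := Real.cos_pos_of_mem_Ioo ⟨by linarith [pi_pos, hθ.1], hθ.2⟩
    have hs : 0 < Real.sin θ := Real.sin_pos_of_pos_of_lt_pi hθ.1 (by linarith [pi_pos, hθ.2])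
    positivity

lemma JA_eq (N : ℕ) (hN : 2 ≤ N) (y : ℝ) :
    Jf (fun θ => Real.sin θ ^ N) y = Jf (fun θ => Real.sin θ ^ (N-2)) y
      - Jf (fun θ => Real.cos θ ^ 2 * Real.sin θ ^ (N-2)) y := by
  calc Jf (fun θ => Real.sin θ ^ N) y
      = Jf (fun θ => Real.sin θ ^ (N-2) - Real.cos θ ^ 2 * Real.sin θ ^ (N-2)) y := by
        refine Jf_congr (fun θ => ?_) y
        have e : Real.sin θ ^ N = Real.sin θ ^ (N-2) * Real.sin θ ^ 2 := by
          rw [← pow_add, show N-2+2 = N from by omega]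
        rw [e, Real.sin_sq]; ring
    _ = _ := Jf_sub _ _ (by fun_prop) (by fun_prop) y

lemma JK2_eq (N : ℕ) (hN : 2 ≤ N) (y : ℝ) :
    Jf (fun θ => Real.cos θ ^ 2 * Real.sin θ ^ N) y
      = Jf (fun θ => Real.cos θ ^ 2 * Real.sin θ ^ (N-2)) y
      - Jf (fun θ => Real.cos θ ^ 4 * Real.sin θ ^ (N-2)) y := by
  calc Jf (fun θ => Real.cos θ ^ 2 * Real.sin θ ^ N) y
      = Jf (fun θ => Real.cos θ ^ 2 * Real.sin θ ^ (N-2)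
          - Real.cos θ ^ 4 * Real.sin θ ^ (N-2)) y := by
        refine Jf_congr (fun θ => ?_) y
        have e : Real.sin θ ^ N = Real.sin θ ^ (N-2) * Real.sin θ ^ 2 := by
          rw [← pow_add, show N-2+2 = N from by omega]
        rw [e, Real.sin_sq]; ring
    _ = _ := Jf_sub _ _ (by fun_prop) (by fun_prop) y


lemma G_nonpos (N : ℕ) (hN : 2 ≤ N) (x : ℝ) (hx : 0 ≤ x) :
    Jf (fun θ => Real.cos θ * Real.sin θ ^ N) x * Jf (fun θ => Real.sin θ ^ (N-2)) x
      - Jf (fun θ => Real.sin θ ^ N) x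
        * Jf (fun θ => Real.cos θ * Real.sin θ ^ (N-2)) x ≤ 0 := by
  set G : ℝ → ℝ := fun y =>
    Jf (fun θ => Real.cos θ * Real.sin θ ^ N) y * Jf (fun θ => Real.sin θ ^ (N-2)) y
      - Jf (fun θ => Real.sin θ ^ N) y * Jf (fun θ => Real.cos θ * Real.sin θ ^ (N-2)) y
    with hGdef
  have hG : ∀ y : ℝ, HasDerivAt G
      (Jf (fun θ => Real.cos θ ^ 2 * Real.sin θ ^ N) y * Jf (fun θ => Real.sin θ ^ (N-2)) y
        - Jf (fun θ => Real.sin θ ^ N) y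
          * Jf (fun θ => Real.cos θ ^ 2 * Real.sin θ ^ (N-2)) y) y := by
    intro y
    have hK := Jf_hasDerivAt (fun θ => Real.cos θ * Real.sin θ ^ N) (by fun_prop) y
    rw [show Jf (fun θ => Real.cos θ * (Real.cos θ * Real.sin θ ^ N)) y
      = Jf (fun θ => Real.cos θ ^ 2 * Real.sin θ ^ N) y from
        Jf_congr (fun θ => by ring) y] at hK
    have hB := Jf_hasDerivAt (fun θ => Real.sin θ ^ (N-2)) (by fun_prop) y
    have hA := Jf_hasDerivAt (fun θ => Real.sin θ ^ N) (by fun_prop) y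
    have hC := Jf_hasDerivAt (fun θ => Real.cos θ * Real.sin θ ^ (N-2)) (by fun_prop) y
    rw [show Jf (fun θ => Real.cos θ * (Real.cos θ * Real.sin θ ^ (N-2))) y
      = Jf (fun θ => Real.cos θ ^ 2 * Real.sin θ ^ (N-2)) y from
        Jf_congr (fun θ => by ring) y] at hC
    have := (hK.mul hB).sub (hA.mul hC)
    refine this.congr_deriv ?_
    ring
  have hderiv_nonpos : ∀ y : ℝ,
      Jf (fun θ => Real.cos θ ^ 2 * Real.sin θ ^ N) y * Jf (fun θ => Real.sin θ ^ (N-2)) y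
        - Jf (fun θ => Real.sin θ ^ N) y
          * Jf (fun θ => Real.cos θ ^ 2 * Real.sin θ ^ (N-2)) y ≤ 0 := by
    intro y
    set b := Jf (fun θ => Real.sin θ ^ (N-2)) y with hb
    set d := Jf (fun θ => Real.cos θ ^ 2 * Real.sin θ ^ (N-2)) y with hd
    set q := Jf (fun θ => Real.cos θ ^ 4 * Real.sin θ ^ (N-2)) y with hq
    have hbpos : 0 < b := JB_pos N y
    have hCS : 0 ≤ Jf (fun θ => (b * Real.cos θ ^ 2 - d) ^ 2 * Real.sin θ ^ (N-2)) y := by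
      refine Jf_nonneg _ (fun θ hθ => ?_) y
      exact mul_nonneg (sq_nonneg _)
        (pow_nonneg (Real.sin_nonneg_of_nonneg_of_le_pi hθ.1 hθ.2) _)
    have hexp : Jf (fun θ => (b * Real.cos θ ^ 2 - d) ^ 2 * Real.sin θ ^ (N-2)) y
        = b^2 * q - (2*b*d) * d - (-(d^2)) * b := by
      calc Jf (fun θ => (b * Real.cos θ ^ 2 - d) ^ 2 * Real.sin θ ^ (N-2)) y
          = Jf (fun θ => b^2 * (Real.cos θ ^ 4 * Real.sin θ ^ (N-2))
              - (2*b*d) * (Real.cos θ ^ 2 * Real.sin θ ^ (N-2))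
              - (-(d^2)) * (Real.sin θ ^ (N-2))) y :=
            Jf_congr (fun θ => by ring) y
        _ = _ := by
            rw [Jf_comb3 _ _ _ (by fun_prop) (by fun_prop) (by fun_prop) _ _ _ y]
    rw [hexp] at hCS
    rw [JA_eq N hN y, JK2_eq N hN y]
    nlinarith [hCS, hbpos]
  have hant : Antitone G := by
    refine antitone_of_deriv_nonpos (fun y => (hG y).differentiableAt) (fun y => ?_)
    rw [(hG y).deriv]
    exact hderiv_nonpos y
  have hG0 : G 0 = 0 := by
    rw [hGdef]
    simp only [K0 N, K0 (N-2)]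
    ring
  calc G x ≤ G 0 := hant hx
    _ = 0 := hG0



/-- For every `x > 0`, `0 < f'(x) < 1/(N-1) ≤ 1`. -/
theorem besselRatio_deriv_bounds (N : ℕ) (hN : 2 ≤ N) (x : ℝ) (hx : 0 < x) :
    0 < deriv (besselRatio N) x ∧ deriv (besselRatio N) x < 1 / ((N : ℝ) - 1) ∧
      1 / ((N : ℝ) - 1) ≤ 1 := by
  have hc1 : (0:ℝ) < (N:ℝ) - 1 := by
    have : (2:ℝ) ≤ (N:ℝ) := by exact_mod_cast hN
    linarith
  have hfun : besselRatio N = fun y =>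
      Jf (fun θ => Real.cos θ * Real.sin θ ^ (N-2)) y
        / Jf (fun θ => Real.sin θ ^ (N-2)) y := by
    funext y
    have h1 : besselRatio N y
        = y / ((N:ℝ) - 1) * Jf (fun θ => Real.sin θ ^ N) y
          / Jf (fun θ => Real.sin θ ^ (N-2)) y := rfl
    rw [h1]
    congr 1
    have hC := identC N hN y
    field_simp
    linarith
  set B := Jf (fun θ => Real.sin θ ^ (N-2)) with hBdef
  set C := Jf (fun θ => Real.cos θ * Real.sin θ ^ (N-2)) with hCdef
  set D := Jf (fun θ => Real.cos θ ^ 2 * Real.sin θ ^ (N-2)) with hDdef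
  set A := Jf (fun θ => Real.sin θ ^ N) with hAdef
  set K := Jf (fun θ => Real.cos θ * Real.sin θ ^ N) with hKdef
  have hBpos : 0 < B x := JB_pos N x
  have hDpos : 0 < D x := JD_pos N x
  have hB : HasDerivAt B (C x) x := Jf_hasDerivAt _ (by fun_prop) x
  have hC : HasDerivAt C (D x) x := by
    have h := Jf_hasDerivAt (fun θ => Real.cos θ * Real.sin θ ^ (N-2)) (by fun_prop) x
    rwa [show Jf (fun θ => Real.cos θ * (Real.cos θ * Real.sin θ ^ (N-2))) x = D x from
      Jf_congr (fun θ => by ring) x] at h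
  have hdiv : HasDerivAt (fun y => C y / B y) ((D x * B x - C x * C x) / B x ^ 2) x :=
    hC.div hB hBpos.ne'
  have hderiv : deriv (besselRatio N) x = (D x * B x - C x * C x) / B x ^ 2 := by
    rw [hfun]; exact hdiv.deriv
  -- numerator is positive
  set m := C x / B x with hmdef
  have hm : m * B x = C x := div_mul_cancel₀ _ hBpos.ne'
  have hvar : 0 < Jf (fun θ => (Real.cos θ - m) ^ 2 * Real.sin θ ^ (N-2)) x := by
    have hnn : ∀ θ ∈ Icc (0:ℝ) π, 0 ≤ (Real.cos θ - m) ^ 2 * Real.sin θ ^ (N-2) :=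
      fun θ hθ => mul_nonneg (sq_nonneg _)
        (pow_nonneg (Real.sin_nonneg_of_nonneg_of_le_pi hθ.1 hθ.2) _)
    rcases le_or_gt 0 m with hm0 | hm0
    · refine Jf_pos _ (by fun_prop) hnn (π/2) π (by positivity) (by linarith [pi_pos])
        le_rfl (fun θ hθ => ?_) x
      have hcneg : Real.cos θ < 0 :=
        Real.cos_neg_of_pi_div_two_lt_of_lt hθ.1 (by linarith [pi_pos, hθ.2])
      have hs : 0 < Real.sin θ :=
        Real.sin_pos_of_pos_of_lt_pi (by linarith [pi_pos, hθ.1]) hθ.2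
      have h2 : 0 < (Real.cos θ - m) ^ 2 :=
        pow_two_pos_of_ne_zero (by linarith)
      positivity
    · refine Jf_pos _ (by fun_prop) hnn 0 (π/2) le_rfl (by positivity)
        (by linarith [pi_pos]) (fun θ hθ => ?_) x
      have hcpos : 0 < Real.cos θ :=
        Real.cos_pos_of_mem_Ioo ⟨by linarith [pi_pos, hθ.1], hθ.2⟩
      have hs : 0 < Real.sin θ :=
        Real.sin_pos_of_pos_of_lt_pi hθ.1 (by linarith [pi_pos, hθ.2])
      have h2 : 0 < (Real.cos θ - m) ^ 2 :=
        pow_two_pos_of_ne_zero (by linarith)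
      positivity
  have hexp : Jf (fun θ => (Real.cos θ - m) ^ 2 * Real.sin θ ^ (N-2)) x
      = 1 * D x - (2*m) * C x - (-(m^2)) * B x := by
    calc Jf (fun θ => (Real.cos θ - m) ^ 2 * Real.sin θ ^ (N-2)) x
        = Jf (fun θ => 1 * (Real.cos θ ^ 2 * Real.sin θ ^ (N-2))
            - (2*m) * (Real.cos θ * Real.sin θ ^ (N-2))
            - (-(m^2)) * (Real.sin θ ^ (N-2))) x :=
          Jf_congr (fun θ => by ring) x
      _ = _ := Jf_comb3 _ _ _ (by fun_prop) (by fun_prop) (by fun_prop) _ _ _ x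
  have hnum : 0 < D x * B x - C x * C x := by
    have he : D x * B x - C x * C x
        = B x * (1 * D x - (2*m) * C x - (-(m^2)) * B x) := by
      rw [← hm]; ring
    rw [he, ← hexp]
    exact mul_pos hBpos hvar
  refine ⟨?_, ?_, ?_⟩
  · rw [hderiv]
    exact div_pos hnum (pow_pos hBpos 2)
  · rw [hderiv, div_lt_div_iff₀ (pow_pos hBpos 2) hc1]
    have hDd : ((N:ℝ)-1) * D x = A x + x * K x := identD N hN x
    have hCc : ((N:ℝ)-1) * C x = x * A x := identC N hN x
    have hGle : K x * B x - A x * C x ≤ 0 := G_nonpos N hN x hx.le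
    have hAB : A x < B x := by
      have hABD : A x = B x - D x := JA_eq N hN x
      linarith
    have hkey : ((N:ℝ)-1) * (D x * B x - C x * C x)
        = A x * B x + x * (K x * B x - A x * C x) := by
      linear_combination (B x) * hDd - (C x) * hCc
    nlinarith [mul_nonpos_of_nonneg_of_nonpos hx.le hGle,
      mul_lt_mul_of_pos_right hAB hBpos]
  · rw [div_le_one hc1]
    have : (2:ℝ) ≤ (N:ℝ) := by exact_mod_cast hN
    linarith

end
end

section
/- For every x > 0, the derivative of the function x ↦ f(x)/x satisfies −5 ≤ −5/(N−1) < (f(x)/x)′ < 0; in particular x ↦ f(x)/x is strictly decreasing on (0,∞). -/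
open MeasureTheory Real intervalIntegral Metric

noncomputable section

namespace BesselRatioAux

/-- `J m x = ∫₀^π e^{x cos θ} sin^m θ dθ`. -/
def J (m : ℕ) (x : ℝ) : ℝ := ∫ θ in (0:ℝ)..π, Real.exp (x * Real.cos θ) * Real.sin θ ^ m

/-- `K m x = ∫₀^π cos θ · e^{x cos θ} sin^m θ dθ`. -/
def K (m : ℕ) (x : ℝ) : ℝ :=
  ∫ θ in (0:ℝ)..π, Real.cos θ * (Real.exp (x * Real.cos θ) * Real.sin θ ^ m)

lemma contJ (m : ℕ) (x : ℝ) :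
    Continuous fun θ : ℝ => Real.exp (x * Real.cos θ) * Real.sin θ ^ m := by fun_prop

lemma intJ (m : ℕ) (x : ℝ) :
    IntervalIntegrable (fun θ => Real.exp (x * Real.cos θ) * Real.sin θ ^ m) volume 0 π :=
  (contJ m x).intervalIntegrable 0 π

lemma intK (m : ℕ) (x : ℝ) :
    IntervalIntegrable (fun θ => Real.cos θ * (Real.exp (x * Real.cos θ) * Real.sin θ ^ m))
      volume 0 π := by
  apply Continuous.intervalIntegrable; fun_prop

lemma J_pos (m : ℕ) (x : ℝ) : 0 < J m x := by
  refine intervalIntegral.intervalIntegral_pos_of_pos_on (intJ m x) ?_ Real.pi_pos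
  intro θ hθ
  have hs : 0 < Real.sin θ := Real.sin_pos_of_pos_of_lt_pi hθ.1 hθ.2
  positivity

lemma K_le_J (m : ℕ) (x : ℝ) : K m x ≤ J m x := by
  refine intervalIntegral.integral_mono_on Real.pi_pos.le (intK m x) (intJ m x) ?_
  intro θ hθ
  have hs : 0 ≤ Real.sin θ := Real.sin_nonneg_of_nonneg_of_le_pi hθ.1 hθ.2
  have he : (0:ℝ) ≤ Real.exp (x * Real.cos θ) * Real.sin θ ^ m := by positivity
  nlinarith [Real.cos_le_one θ]

lemma J_succ_le_J (m : ℕ) (x : ℝ) : J (m + 2) x ≤ J m x := by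
  refine intervalIntegral.integral_mono_on Real.pi_pos.le (intJ (m+2) x) (intJ m x) ?_
  intro θ hθ
  have hs : 0 ≤ Real.sin θ := Real.sin_nonneg_of_nonneg_of_le_pi hθ.1 hθ.2
  have h2 : Real.sin θ ^ (m + 2) ≤ Real.sin θ ^ m :=
    pow_le_pow_of_le_one hs (Real.sin_le_one θ) (by omega)
  have he : (0:ℝ) < Real.exp (x * Real.cos θ) := Real.exp_pos _
  nlinarith

/-- Integration by parts: `(m+1) K m x = x J (m+2) x`. -/
lemma K_eq (m : ℕ) (x : ℝ) : ((m:ℝ)+1) * K m x = x * J (m+2) x := by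
  have hderiv : ∀ θ ∈ Set.uIcc (0:ℝ) π,
      HasDerivAt (fun t => Real.sin t ^ (m+1) * Real.exp (x * Real.cos t))
        (((m:ℝ)+1) * (Real.cos θ * (Real.exp (x * Real.cos θ) * Real.sin θ ^ m))
          - x * (Real.exp (x * Real.cos θ) * Real.sin θ ^ (m+2))) θ := by
    intro θ _
    have h1 : HasDerivAt (fun t : ℝ => Real.sin t ^ (m+1))
        (((m:ℝ)+1) * Real.sin θ ^ m * Real.cos θ) θ := by
      have := (Real.hasDerivAt_sin θ).fun_pow (m+1)
      simpa using this
    have h2 : HasDerivAt (fun t : ℝ => Real.exp (x * Real.cos t))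
        (Real.exp (x * Real.cos θ) * (x * (-Real.sin θ))) θ :=
      (((Real.hasDerivAt_cos θ).const_mul x).exp)
    have := h1.fun_mul h2
    refine this.congr_deriv (Eq.symm ?_)
    ring
  have hint : IntervalIntegrable (fun θ =>
      ((m:ℝ)+1) * (Real.cos θ * (Real.exp (x * Real.cos θ) * Real.sin θ ^ m))
        - x * (Real.exp (x * Real.cos θ) * Real.sin θ ^ (m+2))) volume 0 π := by
    apply Continuous.intervalIntegrable; fun_prop
  have h0 := intervalIntegral.integral_eq_sub_of_hasDerivAt hderiv hint
  simp only [Real.sin_pi, Real.sin_zero, zero_pow (Nat.succ_ne_zero m), zero_mul, sub_zero] at h0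
  rw [intervalIntegral.integral_sub (by apply Continuous.intervalIntegrable; fun_prop)
    (by apply Continuous.intervalIntegrable; fun_prop)] at h0
  rw [intervalIntegral.integral_const_mul, intervalIntegral.integral_const_mul] at h0
  have : ((m:ℝ)+1) * K m x - x * J (m+2) x = 0 := by
    rw [K, J]; linarith [h0]
  linarith [this]

/-- Integration by parts: `(m+1) J m x = (m+2) J (m+2) x + x K (m+2) x`. -/
lemma R_eq (m : ℕ) (x : ℝ) :
    ((m:ℝ)+1) * J m x = ((m:ℝ)+2) * J (m+2) x + x * K (m+2) x := by
  have hderiv : ∀ θ ∈ Set.uIcc (0:ℝ) π,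
      HasDerivAt (fun t => Real.cos t * Real.sin t ^ (m+1) * Real.exp (x * Real.cos t))
        (((m:ℝ)+1) * (Real.exp (x * Real.cos θ) * Real.sin θ ^ m)
          - ((m:ℝ)+2) * (Real.exp (x * Real.cos θ) * Real.sin θ ^ (m+2))
          - x * (Real.cos θ * (Real.exp (x * Real.cos θ) * Real.sin θ ^ (m+2)))) θ := by
    intro θ _
    have h1 : HasDerivAt (fun t : ℝ => Real.cos t * Real.sin t ^ (m+1))
        ((-Real.sin θ) * Real.sin θ ^ (m+1)
          + Real.cos θ * (((m:ℝ)+1) * Real.sin θ ^ m * Real.cos θ)) θ := by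
      have hp : HasDerivAt (fun t : ℝ => Real.sin t ^ (m+1))
          (((m:ℝ)+1) * Real.sin θ ^ m * Real.cos θ) θ := by
        have := (Real.hasDerivAt_sin θ).fun_pow (m+1); simpa using this
      exact (Real.hasDerivAt_cos θ).mul hp
    have h2 : HasDerivAt (fun t : ℝ => Real.exp (x * Real.cos t))
        (Real.exp (x * Real.cos θ) * (x * (-Real.sin θ))) θ :=
      (((Real.hasDerivAt_cos θ).const_mul x).exp)
    have := h1.fun_mul h2
    refine this.congr_deriv (Eq.symm ?_)
    have hsc : Real.sin θ ^ 2 + Real.cos θ ^ 2 = 1 := Real.sin_sq_add_cos_sq θ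
    linear_combination (-((m:ℝ)+1) * Real.sin θ ^ m * Real.exp (x * Real.cos θ)) * hsc
  have hint : IntervalIntegrable (fun θ =>
      ((m:ℝ)+1) * (Real.exp (x * Real.cos θ) * Real.sin θ ^ m)
        - ((m:ℝ)+2) * (Real.exp (x * Real.cos θ) * Real.sin θ ^ (m+2))
        - x * (Real.cos θ * (Real.exp (x * Real.cos θ) * Real.sin θ ^ (m+2)))) volume 0 π := by
    apply Continuous.intervalIntegrable; fun_prop
  have h0 := intervalIntegral.integral_eq_sub_of_hasDerivAt hderiv hint
  simp only [Real.sin_pi, Real.sin_zero, zero_pow (Nat.succ_ne_zero m), zero_mul, mul_zero,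
    sub_zero] at h0
  rw [intervalIntegral.integral_sub (by apply Continuous.intervalIntegrable; fun_prop)
      (by apply Continuous.intervalIntegrable; fun_prop),
    intervalIntegral.integral_sub (by apply Continuous.intervalIntegrable; fun_prop)
      (by apply Continuous.intervalIntegrable; fun_prop),
    intervalIntegral.integral_const_mul, intervalIntegral.integral_const_mul,
    intervalIntegral.integral_const_mul] at h0
  have : ((m:ℝ)+1) * J m x - ((m:ℝ)+2) * J (m+2) x - x * K (m+2) x = 0 := by
    rw [K, J, J]; linarith [h0]
  linarith [this]

/-- Differentiation under the integral sign: `J m` has derivative `K m`. -/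
lemma hasDerivAt_J (m : ℕ) (x : ℝ) : HasDerivAt (J m) (K m x) x := by
  have h := intervalIntegral.hasDerivAt_integral_of_dominated_loc_of_deriv_le
    (F := fun y θ => Real.exp (y * Real.cos θ) * Real.sin θ ^ m)
    (F' := fun y θ => Real.cos θ * (Real.exp (y * Real.cos θ) * Real.sin θ ^ m))
    (x₀ := x) (a := (0:ℝ)) (b := π) (μ := volume)
    (bound := fun _ => Real.exp (|x| + 1)) (Metric.ball_mem_nhds x one_pos)
    ?_ ?_ ?_ ?_ ?_ ?_
  · exact h.2
  · filter_upwards with y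
    exact (Continuous.aestronglyMeasurable (by fun_prop))
  · apply Continuous.intervalIntegrable; fun_prop
  · exact Continuous.aestronglyMeasurable (by fun_prop)
  · filter_upwards with θ _ y hy
    have hy' : |y| ≤ |x| + 1 := by
      have := abs_sub_abs_le_abs_sub y x
      have h2 : |y - x| < 1 := by simpa [Real.dist_eq] using hy
      linarith
    have hcos : |Real.cos θ| ≤ 1 := Real.abs_cos_le_one θ
    have hsin : |Real.sin θ| ≤ 1 := Real.abs_sin_le_one θ
    have h1 : y * Real.cos θ ≤ |x| + 1 := by
      have : y * Real.cos θ ≤ |y * Real.cos θ| := le_abs_self _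
      rw [abs_mul] at this
      nlinarith [abs_nonneg y]
    rw [Real.norm_eq_abs, abs_mul, abs_mul, Real.abs_exp, abs_pow]
    have hp : |Real.sin θ| ^ m ≤ 1 := pow_le_one₀ (abs_nonneg _) hsin
    have he : Real.exp (y * Real.cos θ) ≤ Real.exp (|x| + 1) := Real.exp_le_exp.mpr h1
    have h4 : |Real.cos θ| * (Real.exp (y * Real.cos θ) * |Real.sin θ| ^ m)
        ≤ 1 * (Real.exp (y * Real.cos θ) * 1) := by
      apply mul_le_mul hcos _ (by positivity) zero_le_one
      exact mul_le_mul_of_nonneg_left hp (Real.exp_pos _).le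
    simp only [one_mul, mul_one] at h4
    linarith
  · exact intervalIntegrable_const
  · filter_upwards with θ _ y _
    have h2 : HasDerivAt (fun z : ℝ => Real.exp (z * Real.cos θ))
        (Real.exp (y * Real.cos θ) * Real.cos θ) y := by
      have := ((hasDerivAt_id y).mul_const (Real.cos θ)).exp
      simpa using this
    have := h2.mul_const (Real.sin θ ^ m)
    refine this.congr_deriv (Eq.symm ?_)
    ring

lemma contJ_x (m : ℕ) : Continuous (J m) :=
  Differentiable.continuous fun x => (hasDerivAt_J m x).differentiableAt

/-- The Turán-type expression `Ψ = (N+1) J_N² − (N−1) J_{N+2} J_{N−2}` with `N = n+2`. -/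
def Psi (n : ℕ) (x : ℝ) : ℝ :=
  ((n:ℝ)+3) * (J (n+2) x)^2 - ((n:ℝ)+1) * (J (n+4) x * J n x)

lemma hasDerivAt_Psi (n : ℕ) (x : ℝ) : HasDerivAt (Psi n)
    (((n:ℝ)+3) * (2 * J (n+2) x * K (n+2) x)
      - ((n:ℝ)+1) * (K (n+4) x * J n x + J (n+4) x * K n x)) x := by
  have h1 : HasDerivAt (fun y => (J (n+2) y)^2) (2 * J (n+2) x * K (n+2) x) x := by
    have := (hasDerivAt_J (n+2) x).fun_pow 2
    simpa [mul_comm, mul_assoc] using this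
  have h2 : HasDerivAt (fun y => J (n+4) y * J n y)
      (K (n+4) x * J n x + J (n+4) x * K n x) x :=
    (hasDerivAt_J (n+4) x).mul (hasDerivAt_J n x)
  exact (h1.const_mul _).sub (h2.const_mul _)

lemma contPsi (n : ℕ) : Continuous (Psi n) :=
  Differentiable.continuous fun x => (hasDerivAt_Psi n x).differentiableAt

lemma J_zero (m : ℕ) : J m 0 = ∫ θ in (0:ℝ)..π, Real.sin θ ^ m := by
  simp [J]

lemma J_zero_succ (m : ℕ) : J (m+2) 0 = ((m:ℝ)+1)/((m:ℝ)+2) * J m 0 := by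
  rw [J_zero, J_zero, integral_sin_pow]
  simp [zero_pow (Nat.succ_ne_zero m)]

lemma Psi_zero_pos (n : ℕ) : 0 < Psi n 0 := by
  have hb := J_pos n 0
  have e1 : J (n+2) 0 = ((n:ℝ)+1)/((n:ℝ)+2) * J n 0 := J_zero_succ n
  have e2 : J (n+4) 0 = ((n:ℝ)+3)/((n:ℝ)+4) * J (n+2) 0 := by
    have := J_zero_succ (n+2)
    push_cast at this
    convert this using 3 <;> ring
  have key : Psi n 0
      = 2*((n:ℝ)+1)^2*((n:ℝ)+3)/(((n:ℝ)+2)^2*((n:ℝ)+4)) * (J n 0)^2 := by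
    rw [Psi, e2, e1]
    have h2 : ((n:ℝ)+2) ≠ 0 := by positivity
    have h4 : ((n:ℝ)+4) ≠ 0 := by positivity
    field_simp
    ring
  rw [key]
  positivity

/-- The key Turán-type inequality: `Ψ n x > 0` for all `x ≥ 0`. -/
lemma Psi_pos (n : ℕ) : ∀ x : ℝ, 0 ≤ x → 0 < Psi n x := by
  by_contra hcon
  push_neg at hcon
  obtain ⟨x, hx0, hxle⟩ := hcon
  set S : Set ℝ := {y | 0 ≤ y ∧ y ≤ x ∧ Psi n y ≤ 0} with hS
  have hne : S.Nonempty := ⟨x, hx0, le_refl x, hxle⟩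
  have hbdd : BddBelow S := ⟨0, fun y hy => hy.1⟩
  have hclosed : IsClosed S := by
    have : S = (Set.Ici 0 ∩ Set.Iic x) ∩ Psi n ⁻¹' Set.Iic 0 := by
      ext y; simp [hS, Set.mem_setOf_eq, and_assoc]
    rw [this]
    exact (isClosed_Ici.inter isClosed_Iic).inter (isClosed_Iic.preimage (contPsi n))
  set x₀ := sInf S with hx₀def
  have hx₀S : x₀ ∈ S := hclosed.csInf_mem hne hbdd
  obtain ⟨hx₀0, hx₀x, hPsix₀⟩ := hx₀S
  have hx₀pos : 0 < x₀ := by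
    rcases hx₀0.lt_or_eq with h | h
    · exact h
    · exfalso; have := Psi_zero_pos n; rw [h] at this; linarith
  have hlt : ∀ y, 0 ≤ y → y < x₀ → 0 < Psi n y := by
    intro y hy0 hyx
    by_contra hle
    push_neg at hle
    have hyS : y ∈ S := ⟨hy0, le_trans hyx.le hx₀x, hle⟩
    exact absurd (csInf_le hbdd hyS) (not_le.mpr hyx)
  have hPsi0 : Psi n x₀ = 0 := by
    refine le_antisymm hPsix₀ ?_
    have htend : Filter.Tendsto (Psi n) (nhdsWithin x₀ (Set.Iio x₀)) (nhds (Psi n x₀)) :=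
      ((contPsi n).tendsto x₀).mono_left nhdsWithin_le_nhds
    refine ge_of_tendsto htend ?_
    filter_upwards [Ioo_mem_nhdsLT_of_mem (⟨hx₀pos, le_refl x₀⟩ : x₀ ∈ Set.Ioc 0 x₀)]
      with y hy
    exact (hlt y hy.1.le hy.2).le
  -- derivative at x₀ is positive
  set a := J (n+2) x₀ with ha_def
  set b := J n x₀ with hb_def
  set c := J (n+4) x₀ with hc_def
  have ha : 0 < a := J_pos _ _
  have hb : 0 < b := J_pos _ _
  have hc : 0 < c := J_pos _ _
  have hK2 : ((n:ℝ)+3) * K (n+2) x₀ = x₀ * c := by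
    have := K_eq (n+2) x₀
    push_cast at this
    have hidx : n + 2 + 2 = n + 4 := by omega
    rw [hidx] at this
    linarith
  have hKn : ((n:ℝ)+1) * K n x₀ = x₀ * a := K_eq n x₀
  have hRn : ((n:ℝ)+1) * b = ((n:ℝ)+2) * a + x₀ * K (n+2) x₀ := R_eq n x₀
  have hR2 : ((n:ℝ)+3) * a = ((n:ℝ)+4) * c + x₀ * K (n+4) x₀ := by
    have := R_eq (n+2) x₀
    push_cast at this
    have hidx : n + 2 + 2 = n + 4 := by omega
    rw [hidx] at this
    linarith
  have hzero : ((n:ℝ)+3) * a^2 = ((n:ℝ)+1) * (c * b) := by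
    have : ((n:ℝ)+3) * a^2 - ((n:ℝ)+1) * (c * b) = 0 := hPsi0
    linarith
  set D := ((n:ℝ)+3) * (2 * a * K (n+2) x₀)
      - ((n:ℝ)+1) * (K (n+4) x₀ * b + c * K n x₀) with hD_def
  have hxD : x₀ * D = 2*((n:ℝ)+3) * a^2 := by
    rw [hD_def]
    linear_combination (2*a*x₀ - a*x₀) * hK2 + (-x₀*c) * hKn + (((n:ℝ)+1)*b) * hR2
      + (-((n:ℝ)+4)) * hzero + (-((n:ℝ)+3)*a) * hRn
  have hxDpos : 0 < x₀ * D := by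
    rw [hxD]; positivity
  have hDpos : 0 < D := by
    by_contra h
    push_neg at h
    nlinarith
  have hDD : HasDerivAt (Psi n) D x₀ := hasDerivAt_Psi n x₀
  rw [hasDerivAt_iff_tendsto_slope] at hDD
  have hev : {y | 0 < slope (Psi n) x₀ y} ∈ nhdsWithin x₀ {x₀}ᶜ :=
    hDD (Ioi_mem_nhds hDpos)
  have hmono : nhdsWithin x₀ (Set.Iio x₀) ≤ nhdsWithin x₀ {x₀}ᶜ :=
    nhdsWithin_mono x₀ (fun y hy => ne_of_lt hy)
  have hev2 : ∀ᶠ y in nhdsWithin x₀ (Set.Iio x₀), 0 < slope (Psi n) x₀ y :=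
    Filter.Eventually.filter_mono hmono hev
  have hmem : ∀ᶠ y in nhdsWithin x₀ (Set.Iio x₀), y ∈ Set.Ioo 0 x₀ :=
    Filter.eventually_of_mem
      (Ioo_mem_nhdsLT_of_mem (⟨hx₀pos, le_refl x₀⟩ : x₀ ∈ Set.Ioc 0 x₀)) (fun y hy => hy)
  obtain ⟨y, hy1, hy2⟩ := (hev2.and hmem).exists
  have hslope : slope (Psi n) x₀ y = (Psi n y - Psi n x₀) / (y - x₀) :=
    slope_def_field _ _ _
  rw [hslope, hPsi0, sub_zero] at hy1
  have hyneg : y - x₀ < 0 := by linarith [hy2.2]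
  have : Psi n y < 0 := by
    by_contra h
    push_neg at h
    have := div_nonpos_of_nonneg_of_nonpos h hyneg.le
    linarith
  linarith [hlt y hy2.1.le hy2.2]


end BesselRatioAux

open BesselRatioAux

set_option maxHeartbeats 1000000 in
/-- For every `x > 0`, `-5 ≤ -5/(N-1) < (f(x)/x)' < 0`; in particular `x ↦ f(x)/x` is
strictly decreasing on `(0, ∞)`. -/
theorem besselRatio_div_deriv_bounds (N : ℕ) (hN : 2 ≤ N) :
    (∀ x : ℝ, 0 < x →
      (-5 : ℝ) ≤ -5 / ((N : ℝ) - 1) ∧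
        -5 / ((N : ℝ) - 1) < deriv (fun y => besselRatio N y / y) x ∧
        deriv (fun y => besselRatio N y / y) x < 0) ∧
      StrictAntiOn (fun y => besselRatio N y / y) (Set.Ioi 0) := by
  obtain ⟨n, rfl⟩ : ∃ n, N = n + 2 := ⟨N - 2, by omega⟩
  have hcast : ((n + 2 : ℕ) : ℝ) - 1 = (n : ℝ) + 1 := by push_cast; ring
  have hn1 : (0:ℝ) < (n:ℝ) + 1 := by positivity
  have hn3 : (0:ℝ) < (n:ℝ) + 3 := by positivity
  set G : ℝ → ℝ := fun y => J (n+2) y / (((n:ℝ)+1) * J n y) with hG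
  have hEqOn : ∀ y : ℝ, y ≠ 0 → besselRatio (n+2) y / y = G y := by
    intro y hy
    have hb := (J_pos n y).ne'
    show (y / (((n + 2 : ℕ) : ℝ) - 1) * J (n+2) y / J n y) / y = G y
    rw [hcast, hG]
    field_simp
  have hGc : Continuous G := by
    refine Continuous.div (contJ_x (n+2)) (continuous_const.mul (contJ_x n)) ?_
    exact fun y => (mul_pos hn1 (J_pos n y)).ne'
  have key : ∀ x : ℝ, 0 < x →
      -5/((n:ℝ)+1) < deriv (fun y => besselRatio (n+2) y / y) x ∧
      deriv (fun y => besselRatio (n+2) y / y) x < 0 := by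
    intro x hx
    set a := J (n+2) x with ha_def
    set b := J n x with hb_def
    set c := J (n+4) x with hc_def
    have ha : 0 < a := J_pos _ _
    have hb : 0 < b := J_pos _ _
    have hc : 0 < c := J_pos _ _
    set Num := K (n+2) x * (((n:ℝ)+1) * b) - a * (((n:ℝ)+1) * K n x) with hNum_def
    have hden : (0:ℝ) < (((n:ℝ)+1) * b)^2 := by positivity
    have hGd : HasDerivAt G (Num / (((n:ℝ)+1) * b)^2) x := by
      exact (hasDerivAt_J (n+2) x).div ((hasDerivAt_J n x).const_mul ((n:ℝ)+1))
        (mul_pos hn1 hb).ne'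
    have hEv : (fun y => besselRatio (n+2) y / y) =ᶠ[nhds x] G := by
      filter_upwards [eventually_ne_nhds hx.ne'] with y hy
      exact hEqOn y hy
    have hBd : HasDerivAt (fun y => besselRatio (n+2) y / y)
        (Num / (((n:ℝ)+1) * b)^2) x := hGd.congr_of_eventuallyEq hEv
    have hderiv_eq : deriv (fun y => besselRatio (n+2) y / y) x
        = Num / (((n:ℝ)+1) * b)^2 := hBd.deriv
    have hK2 : ((n:ℝ)+3) * K (n+2) x = x * c := by
      have := K_eq (n+2) x
      push_cast at this
      have hidx : n + 2 + 2 = n + 4 := by omega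
      rw [hidx] at this
      linarith
    have hKn : ((n:ℝ)+1) * K n x = x * a := K_eq n x
    have hP : 0 < ((n:ℝ)+3) * a^2 - ((n:ℝ)+1) * (c * b) := Psi_pos n x hx.le
    have hNum3 : ((n:ℝ)+3) * Num
        = -x * (((n:ℝ)+3) * a^2 - ((n:ℝ)+1) * (c * b)) := by
      rw [hNum_def]
      linear_combination (((n:ℝ)+1) * b) * hK2 + (-(((n:ℝ)+3) * a)) * hKn
    have hNumneg : Num < 0 := by
      have h1 : ((n:ℝ)+3) * Num < 0 := by
        rw [hNum3]
        nlinarith [mul_pos hx hP]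
      nlinarith [h1]
    constructor
    · rw [hderiv_eq]
      rw [div_lt_div_iff₀ hn1 hden]
      have hxa : x * a ≤ ((n:ℝ)+1) * b := by
        have h1 : K n x ≤ b := K_le_J n x
        have h2 : ((n:ℝ)+1) * K n x ≤ ((n:ℝ)+1) * b :=
          mul_le_mul_of_nonneg_left h1 hn1.le
        linarith [hKn]
      have hab : a ≤ b := J_succ_le_J n x
      have hPle : ((n:ℝ)+3) * a^2 - ((n:ℝ)+1) * (c * b) ≤ ((n:ℝ)+3) * a^2 := by
        have : (0:ℝ) ≤ ((n:ℝ)+1) * (c * b) := by positivity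
        linarith
      have stepA : x * (((n:ℝ)+3) * a^2 - ((n:ℝ)+1) * (c * b))
          ≤ ((n:ℝ)+3) * ((n:ℝ)+1) * b^2 := by
        have t1 := mul_le_mul_of_nonneg_left hPle hx.le
        have t2 : ((n:ℝ)+3) * ((x*a)*a) ≤ ((n:ℝ)+3) * ((((n:ℝ)+1)*b)*a) :=
          mul_le_mul_of_nonneg_left (mul_le_mul_of_nonneg_right hxa ha.le) hn3.le
        have t3 : (((n:ℝ)+3) * (((n:ℝ)+1)*b)) * a ≤ (((n:ℝ)+3) * (((n:ℝ)+1)*b)) * b :=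
          mul_le_mul_of_nonneg_left hab (by positivity)
        nlinarith [t1, t2, t3]
      refine (mul_lt_mul_iff_right₀ hn3).mp ?_
      have hre : ((n:ℝ)+3) * (Num * ((n:ℝ)+1))
          = -(x * (((n:ℝ)+3) * a^2 - ((n:ℝ)+1) * (c * b))) * ((n:ℝ)+1) := by
        linear_combination ((n:ℝ)+1) * hNum3
      rw [hre]
      have hgap : 0 < ((n:ℝ)+3) * (((n:ℝ)+1)^2) * b^2 := by positivity
      have t4 := mul_le_mul_of_nonneg_left stepA hn1.le
      nlinarith [t4, hgap]
    · rw [hderiv_eq]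
      exact div_neg_of_neg_of_pos hNumneg hden
  constructor
  · intro x hx
    refine ⟨?_, ?_, (key x hx).2⟩
    · rw [hcast]
      have h1 : (1:ℝ) ≤ (n:ℝ) + 1 := by
        have := Nat.cast_nonneg (α := ℝ) n; linarith
      have h2 : (5:ℝ)/((n:ℝ)+1) ≤ 5 := div_le_self (by norm_num) h1
      have h3 : -5 / ((n:ℝ)+1) = -(5/((n:ℝ)+1)) := by ring
      rw [h3]; linarith
    · rw [hcast]
      exact (key x hx).1
  · refine strictAntiOn_of_deriv_neg (convex_Ioi 0) ?_ ?_
    · exact hGc.continuousOn.congr (fun y hy => hEqOn y (ne_of_gt hy))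
    · intro y hy
      rw [interior_Ioi] at hy
      exact (key y hy).2

end
end

section
/- For every x > 0, the derivative of f satisfies the identity f′(x) = 1 − (N−1) f(x)/x − f(x)². -/
open MeasureTheory Real
open intervalIntegral Set

noncomputable section

lemma contInt (k : ℕ) (x : ℝ) :
    Continuous (fun θ : ℝ => Real.exp (x * Real.cos θ) * Real.sin θ ^ k) := by
  fun_prop

lemma contInt' (k : ℕ) (x : ℝ) :
    Continuous (fun θ : ℝ => Real.exp (x * Real.cos θ) * Real.cos θ * Real.sin θ ^ k) := by
  fun_prop

lemma hasDerivAt_int (k : ℕ) (x : ℝ) :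
    HasDerivAt (fun y => ∫ θ in (0:ℝ)..π, Real.exp (y * Real.cos θ) * Real.sin θ ^ k)
      (∫ θ in (0:ℝ)..π, Real.exp (x * Real.cos θ) * Real.cos θ * Real.sin θ ^ k) x := by
  have h := intervalIntegral.hasDerivAt_integral_of_dominated_loc_of_deriv_le
      (F := fun y θ => Real.exp (y * Real.cos θ) * Real.sin θ ^ k)
      (F' := fun y θ => Real.exp (y * Real.cos θ) * Real.cos θ * Real.sin θ ^ k)
      (x₀ := x) (a := (0:ℝ)) (b := π) (μ := volume)
      (bound := fun _ => Real.exp (|x| + 1)) (s := Metric.ball x 1) (Metric.ball_mem_nhds x one_pos)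
      (Filter.Eventually.of_forall fun y => (contInt k y).aestronglyMeasurable)
      ((contInt k x).intervalIntegrable _ _)
      ((contInt' k x).aestronglyMeasurable)
      ?_ (intervalIntegrable_const) ?_
  · exact h.2
  · refine Filter.Eventually.of_forall fun θ hθ y hy => ?_
    have hθ' : θ ∈ Set.Ioc (0:ℝ) π := by
      rwa [Set.uIoc_of_le Real.pi_pos.le] at hθ
    have hs0 : 0 ≤ Real.sin θ := Real.sin_nonneg_of_nonneg_of_le_pi hθ'.1.le hθ'.2
    have hs1 : Real.sin θ ≤ 1 := Real.sin_le_one θ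
    have hyx : |y| ≤ |x| + 1 := by
      have := mem_ball_iff_norm.mp hy
      have : |y - x| < 1 := this
      calc |y| = |x + (y - x)| := by ring_nf
        _ ≤ |x| + |y - x| := abs_add_le _ _
        _ ≤ |x| + 1 := by linarith
    have h1 : Real.exp (y * Real.cos θ) ≤ Real.exp (|x| + 1) := by
      apply Real.exp_le_exp.mpr
      calc y * Real.cos θ ≤ |y * Real.cos θ| := le_abs_self _
        _ = |y| * |Real.cos θ| := abs_mul _ _
        _ ≤ (|x| + 1) * 1 := by
            apply mul_le_mul hyx (Real.abs_cos_le_one θ) (abs_nonneg _) (by positivity)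
        _ = |x| + 1 := mul_one _
    calc ‖Real.exp (y * Real.cos θ) * Real.cos θ * Real.sin θ ^ k‖
        = Real.exp (y * Real.cos θ) * |Real.cos θ| * (Real.sin θ ^ k) := by
          rw [norm_eq_abs, abs_mul, abs_mul, abs_of_pos (Real.exp_pos _),
            abs_pow, abs_of_nonneg hs0]
      _ ≤ Real.exp (|x| + 1) * 1 * 1 := by
          apply mul_le_mul
          · exact mul_le_mul h1 (Real.abs_cos_le_one θ) (abs_nonneg _) (Real.exp_pos _).le
          · exact pow_le_one₀ hs0 hs1
          · positivity
          · positivity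
      _ = Real.exp (|x| + 1) := by ring
  · refine Filter.Eventually.of_forall fun θ _ y _ => ?_
    have h1 : HasDerivAt (fun y : ℝ => y * Real.cos θ) (Real.cos θ) y :=
      hasDerivAt_mul_const _
    have h2 := (h1.exp).mul_const (Real.sin θ ^ k)
    convert h2 using 1

lemma intPos (m : ℕ) (x : ℝ) :
    0 < ∫ θ in (0:ℝ)..π, Real.exp (x * Real.cos θ) * Real.sin θ ^ m := by
  apply intervalIntegral.intervalIntegral_pos_of_pos_on
    ((contInt m x).intervalIntegrable _ _)
  · intro θ hθ
    have := Real.sin_pos_of_pos_of_lt_pi hθ.1 hθ.2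
    positivity
  · exact Real.pi_pos

lemma ibp1 (m : ℕ) (x : ℝ) :
    ((m : ℝ) + 1) * ∫ θ in (0:ℝ)..π, Real.exp (x * Real.cos θ) * Real.cos θ * Real.sin θ ^ m
      = x * ∫ θ in (0:ℝ)..π, Real.exp (x * Real.cos θ) * Real.sin θ ^ (m + 2) := by
  have key := intervalIntegral.integral_mul_deriv_eq_deriv_mul (a := (0:ℝ)) (b := π)
      (u := fun θ => Real.exp (x * Real.cos θ))
      (u' := fun θ => Real.exp (x * Real.cos θ) * (-x * Real.sin θ))
      (v := fun θ => Real.sin θ ^ (m + 1))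
      (v' := fun θ => ((m : ℝ) + 1) * Real.cos θ * Real.sin θ ^ m)
      (fun θ _ => by
        have h1 : HasDerivAt (fun θ : ℝ => x * Real.cos θ) (-x * Real.sin θ) θ := by
          simpa [mul_comm, neg_mul, mul_neg] using (Real.hasDerivAt_cos θ).const_mul x
        exact h1.exp)
      (fun θ _ => by
        have := (Real.hasDerivAt_sin θ).fun_pow (m + 1)
        convert this using 1
        push_cast
        ring)
      ((by fun_prop : Continuous fun θ : ℝ => Real.exp (x * Real.cos θ) * (-x * Real.sin θ)).intervalIntegrable _ _)
      ((by fun_prop : Continuous fun θ : ℝ => ((m : ℝ) + 1) * Real.cos θ * Real.sin θ ^ m).intervalIntegrable _ _)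
  simp only [Real.sin_pi, Real.sin_zero, zero_pow (Nat.succ_ne_zero m), mul_zero, sub_zero,
    zero_sub] at key
  have l1 : ∫ θ in (0:ℝ)..π, Real.exp (x * Real.cos θ) * (((m : ℝ) + 1) * Real.cos θ * Real.sin θ ^ m)
      = ((m : ℝ) + 1) * ∫ θ in (0:ℝ)..π, Real.exp (x * Real.cos θ) * Real.cos θ * Real.sin θ ^ m := by
    rw [← intervalIntegral.integral_const_mul]
    congr 1; funext θ; ring
  have l2 : ∫ θ in (0:ℝ)..π, Real.exp (x * Real.cos θ) * (-x * Real.sin θ) * Real.sin θ ^ (m + 1)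
      = -x * ∫ θ in (0:ℝ)..π, Real.exp (x * Real.cos θ) * Real.sin θ ^ (m + 2) := by
    rw [← intervalIntegral.integral_const_mul]
    congr 1; funext θ; ring
  rw [l1, l2] at key
  linarith [key]

lemma ibp2 (m : ℕ) (x : ℝ) :
    x * ∫ θ in (0:ℝ)..π, Real.exp (x * Real.cos θ) * Real.cos θ * Real.sin θ ^ (m + 2)
      = ((m : ℝ) + 1) * (∫ θ in (0:ℝ)..π, Real.exp (x * Real.cos θ) * Real.sin θ ^ m)
        - ((m : ℝ) + 2) * ∫ θ in (0:ℝ)..π, Real.exp (x * Real.cos θ) * Real.sin θ ^ (m + 2) := by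
  have key := intervalIntegral.integral_mul_deriv_eq_deriv_mul (a := (0:ℝ)) (b := π)
      (u := fun θ => Real.exp (x * Real.cos θ))
      (u' := fun θ => Real.exp (x * Real.cos θ) * (-x * Real.sin θ))
      (v := fun θ => Real.cos θ * Real.sin θ ^ (m + 1))
      (v' := fun θ => ((m : ℝ) + 1) * Real.sin θ ^ m - ((m : ℝ) + 2) * Real.sin θ ^ (m + 2))
      (fun θ _ => by
        have h1 : HasDerivAt (fun θ : ℝ => x * Real.cos θ) (-x * Real.sin θ) θ := by
          simpa [mul_comm, neg_mul, mul_neg] using (Real.hasDerivAt_cos θ).const_mul x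
        exact h1.exp)
      (fun θ _ => by
        have h1 := (Real.hasDerivAt_cos θ).fun_mul ((Real.hasDerivAt_sin θ).fun_pow (m + 1))
        convert h1 using 1
        have hsc := Real.sin_sq_add_cos_sq θ
        push_cast
        linear_combination (-(((m : ℝ) + 1) * Real.sin θ ^ m)) * hsc)
      ((by fun_prop : Continuous fun θ : ℝ => Real.exp (x * Real.cos θ) * (-x * Real.sin θ)).intervalIntegrable _ _)
      ((by fun_prop : Continuous fun θ : ℝ => ((m : ℝ) + 1) * Real.sin θ ^ m - ((m : ℝ) + 2) * Real.sin θ ^ (m + 2)).intervalIntegrable _ _)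
  simp only [Real.sin_pi, Real.sin_zero, zero_pow (Nat.succ_ne_zero m), mul_zero, sub_zero,
    zero_sub] at key
  have l1 : (∫ θ in (0:ℝ)..π, Real.exp (x * Real.cos θ) *
        (((m : ℝ) + 1) * Real.sin θ ^ m - ((m : ℝ) + 2) * Real.sin θ ^ (m + 2)))
      = ((m : ℝ) + 1) * (∫ θ in (0:ℝ)..π, Real.exp (x * Real.cos θ) * Real.sin θ ^ m)
        - ((m : ℝ) + 2) * ∫ θ in (0:ℝ)..π, Real.exp (x * Real.cos θ) * Real.sin θ ^ (m + 2) := by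
    rw [← intervalIntegral.integral_const_mul, ← intervalIntegral.integral_const_mul,
      ← intervalIntegral.integral_sub
        ((by fun_prop : Continuous fun θ : ℝ => ((m : ℝ) + 1) * (Real.exp (x * Real.cos θ) * Real.sin θ ^ m)).intervalIntegrable _ _)
        ((by fun_prop : Continuous fun θ : ℝ => ((m : ℝ) + 2) * (Real.exp (x * Real.cos θ) * Real.sin θ ^ (m + 2))).intervalIntegrable _ _)]
    congr 1; funext θ; ring
  have l2 : (∫ θ in (0:ℝ)..π, Real.exp (x * Real.cos θ) * (-x * Real.sin θ) *
        (Real.cos θ * Real.sin θ ^ (m + 1)))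
      = -x * ∫ θ in (0:ℝ)..π, Real.exp (x * Real.cos θ) * Real.cos θ * Real.sin θ ^ (m + 2) := by
    rw [← intervalIntegral.integral_const_mul]
    congr 1; funext θ; ring
  rw [l1, l2] at key
  linarith [key]


/-- For every `x > 0`, `f'(x) = 1 - (N-1) f(x)/x - f(x)²`. -/
theorem besselRatio_deriv_identity (N : ℕ) (hN : 2 ≤ N) (x : ℝ) (hx : 0 < x) :
    deriv (besselRatio N) x =
      1 - ((N : ℝ) - 1) * besselRatio N x / x - besselRatio N x ^ 2 := by
  obtain ⟨m, rfl⟩ : ∃ m, N = m + 2 := ⟨N - 2, by omega⟩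
  set c : ℝ := (m : ℝ) + 1 with hc
  have hcpos : (0:ℝ) < c := by positivity
  set A : ℝ → ℝ := fun y => ∫ θ in (0:ℝ)..π, Real.exp (y * Real.cos θ) * Real.sin θ ^ (m + 2)
    with hA
  set B : ℝ → ℝ := fun y => ∫ θ in (0:ℝ)..π, Real.exp (y * Real.cos θ) * Real.sin θ ^ m with hB
  have hfun : besselRatio (m + 2) = fun y => y / c * A y / B y := by
    funext y
    have hcast : ((m + 2 : ℕ) : ℝ) - 1 = c := by push_cast [hc]; ring
    simp only [besselRatio, hA, hB, Nat.add_sub_cancel, hcast]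
  set a' : ℝ := ∫ θ in (0:ℝ)..π, Real.exp (x * Real.cos θ) * Real.cos θ * Real.sin θ ^ (m + 2)
    with ha'
  set b' : ℝ := ∫ θ in (0:ℝ)..π, Real.exp (x * Real.cos θ) * Real.cos θ * Real.sin θ ^ m
    with hb'
  have hdA : HasDerivAt A a' x := hasDerivAt_int (m + 2) x
  have hdB : HasDerivAt B b' x := hasDerivAt_int m x
  have hBpos : 0 < B x := intPos m x
  have hBne : B x ≠ 0 := ne_of_gt hBpos
  have hnum : HasDerivAt (fun y => y / c * A y) (1 / c * A x + x / c * a') x :=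
    ((hasDerivAt_id x).div_const c).mul hdA
  have hf : HasDerivAt (besselRatio (m + 2))
      (((1 / c * A x + x / c * a') * B x - x / c * A x * b') / (B x) ^ 2) x := by
    rw [hfun]
    exact hnum.div hdB hBne
  rw [hf.deriv, hfun]
  have h1 : c * b' = x * A x := ibp1 m x
  have h2 : x * a' = c * B x - (c + 1) * A x := by
    have h := ibp2 m x
    simp only [hA, hB, hc, ha']
    linarith [h]
  have hxne : x ≠ 0 := ne_of_gt hx
  have hcne : c ≠ 0 := ne_of_gt hcpos
  have hcast : ((m + 2 : ℕ) : ℝ) - 1 = c := by push_cast [hc]; ring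
  rw [hcast]
  have hxne' : x ≠ 0 := hxne
  have hb2 : b' = x * A x / c := by
    rw [eq_div_iff hcne]; linarith [h1]
  have ha2 : a' = (c * B x - (c + 1) * A x) / x := by
    rw [eq_div_iff hxne]; linarith [h2]
  rw [hb2, ha2]
  field_simp
  ring

end
end

section
/- For every x > 0, one has 0 < f(x)/x < 1/(N−1) and f(x)² < 1. -/
open MeasureTheory Real

noncomputable section

/-- For every `x > 0`, `0 < f(x)/x < 1/(N-1)` and `f(x)² < 1`. -/
theorem besselRatio_div_bounds (N : ℕ) (hN : 2 ≤ N) (x : ℝ) (hx : 0 < x) :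
    0 < besselRatio N x / x ∧ besselRatio N x / x < 1 / ((N : ℝ) - 1) ∧
      besselRatio N x ^ 2 < 1 := by
  obtain ⟨m, rfl⟩ : ∃ m, N = m + 2 := ⟨N - 2, by omega⟩
  have hNr : ((m + 2 : ℕ) : ℝ) - 1 = (m : ℝ) + 1 := by push_cast; ring
  have hm1 : (0:ℝ) < (m : ℝ) + 1 := by positivity
  -- continuity facts
  have contk : ∀ k : ℕ, Continuous fun θ : ℝ => Real.exp (x * Real.cos θ) * Real.sin θ ^ k :=
    fun k => (Real.continuous_exp.comp (continuous_const.mul Real.continuous_cos)).mul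
      (Real.continuous_sin.pow k)
  have contC : Continuous fun θ : ℝ => Real.exp (x * Real.cos θ) * Real.sin θ ^ m * Real.cos θ :=
    (contk m).mul Real.continuous_cos
  set A := ∫ θ in (0:ℝ)..π, Real.exp (x * Real.cos θ) * Real.sin θ ^ (m + 2) with hA_def
  set B := ∫ θ in (0:ℝ)..π, Real.exp (x * Real.cos θ) * Real.sin θ ^ m with hB_def
  set C := ∫ θ in (0:ℝ)..π, Real.exp (x * Real.cos θ) * Real.sin θ ^ m * Real.cos θ with hC_def
  have intA : IntervalIntegrable (fun θ : ℝ => Real.exp (x * Real.cos θ) * Real.sin θ ^ (m + 2))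
      volume 0 π := (contk (m + 2)).intervalIntegrable 0 π
  have intB : IntervalIntegrable (fun θ : ℝ => Real.exp (x * Real.cos θ) * Real.sin θ ^ m)
      volume 0 π := (contk m).intervalIntegrable 0 π
  have intC : IntervalIntegrable
      (fun θ : ℝ => Real.exp (x * Real.cos θ) * Real.sin θ ^ m * Real.cos θ)
      volume 0 π := contC.intervalIntegrable 0 π
  -- positivity of A and B
  have hApos : 0 < A := by
    refine intervalIntegral.intervalIntegral_pos_of_pos_on intA (fun θ hθ => ?_) Real.pi_pos
    have := Real.sin_pos_of_pos_of_lt_pi hθ.1 hθ.2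
    positivity
  have hBpos : 0 < B := by
    refine intervalIntegral.intervalIntegral_pos_of_pos_on intB (fun θ hθ => ?_) Real.pi_pos
    have := Real.sin_pos_of_pos_of_lt_pi hθ.1 hθ.2
    positivity
  -- C < B
  have hCB : C < B := by
    have h : 0 < ∫ θ in (0:ℝ)..π,
        (Real.exp (x * Real.cos θ) * Real.sin θ ^ m
          - Real.exp (x * Real.cos θ) * Real.sin θ ^ m * Real.cos θ) := by
      refine intervalIntegral.intervalIntegral_pos_of_pos_on (intB.sub intC)
        (fun θ hθ => ?_) Real.pi_pos
      have hs := Real.sin_pos_of_pos_of_lt_pi hθ.1 hθ.2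
      have hc : Real.cos θ < 1 := by
        have := Real.cos_lt_cos_of_nonneg_of_le_pi le_rfl hθ.2.le hθ.1
        simpa using this
      have he : (0:ℝ) < Real.exp (x * Real.cos θ) * Real.sin θ ^ m := by positivity
      nlinarith
    rw [intervalIntegral.integral_sub intB intC] at h
    linarith
  -- A < B
  have hAB : A < B := by
    have h1 : 0 < ∫ θ in (0:ℝ)..(π/2),
        (Real.exp (x * Real.cos θ) * Real.sin θ ^ m
          - Real.exp (x * Real.cos θ) * Real.sin θ ^ (m + 2)) := by
      refine intervalIntegral.intervalIntegral_pos_of_pos_on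
        (((contk m).sub (contk (m + 2))).intervalIntegrable 0 (π/2))
        (fun θ hθ => ?_) (by positivity)
      have hs := Real.sin_pos_of_pos_of_lt_pi hθ.1 (lt_trans hθ.2 (by linarith [Real.pi_pos]))
      have hc : 0 < Real.cos θ := Real.cos_pos_of_mem_Ioo
        ⟨by linarith [Real.pi_pos, hθ.1], hθ.2⟩
      have he : (0:ℝ) < Real.exp (x * Real.cos θ) := Real.exp_pos _
      have hsin1 : Real.sin θ ^ (m + 2) = Real.sin θ ^ m * Real.sin θ ^ 2 := by ring
      have h2 : Real.sin θ ^ 2 < 1 := by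
        nlinarith [Real.sin_sq_add_cos_sq θ]
      nlinarith [mul_pos he (pow_pos hs m)]
    have h2 : 0 ≤ ∫ θ in (π/2:ℝ)..π,
        (Real.exp (x * Real.cos θ) * Real.sin θ ^ m
          - Real.exp (x * Real.cos θ) * Real.sin θ ^ (m + 2)) := by
      refine intervalIntegral.integral_nonneg (by linarith [Real.pi_pos]) (fun θ hθ => ?_)
      have hs : 0 ≤ Real.sin θ := Real.sin_nonneg_of_nonneg_of_le_pi
        (by linarith [Real.pi_pos, hθ.1]) hθ.2
      have hs1 : Real.sin θ ≤ 1 := Real.sin_le_one θ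
      have he : (0:ℝ) < Real.exp (x * Real.cos θ) := Real.exp_pos _
      have : Real.sin θ ^ (m + 2) ≤ Real.sin θ ^ m := by
        calc Real.sin θ ^ (m + 2) = Real.sin θ ^ m * Real.sin θ ^ 2 := by ring
        _ ≤ Real.sin θ ^ m * 1 := by
            have : Real.sin θ ^ 2 ≤ 1 := by nlinarith
            nlinarith [pow_nonneg hs m]
        _ = Real.sin θ ^ m := by ring
      nlinarith
    have hsplit := intervalIntegral.integral_add_adjacent_intervals (μ := volume)
      (((contk m).sub (contk (m + 2))).intervalIntegrable 0 (π/2))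
      (((contk m).sub (contk (m + 2))).intervalIntegrable (π/2) π)
    have h : 0 < ∫ θ in (0:ℝ)..π,
        (Real.exp (x * Real.cos θ) * Real.sin θ ^ m
          - Real.exp (x * Real.cos θ) * Real.sin θ ^ (m + 2)) := by
      simp only [Pi.sub_apply] at hsplit
      rw [← hsplit]; linarith
    rw [intervalIntegral.integral_sub intB intA] at h
    linarith
  -- integration by parts identity : x * A = (m+1) * C
  have hIBP : x * A = ((m : ℝ) + 1) * C := by
    have hderiv : ∀ θ ∈ Set.uIcc (0:ℝ) π, HasDerivAt
        (fun θ : ℝ => Real.exp (x * Real.cos θ) * Real.sin θ ^ (m + 1))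
        (((m : ℝ) + 1) * (Real.exp (x * Real.cos θ) * Real.sin θ ^ m * Real.cos θ)
          - x * (Real.exp (x * Real.cos θ) * Real.sin θ ^ (m + 2))) θ := by
      intro θ _
      have h1 : HasDerivAt (fun θ : ℝ => Real.exp (x * Real.cos θ))
          (Real.exp (x * Real.cos θ) * (x * (-Real.sin θ))) θ :=
        (((Real.hasDerivAt_cos θ).const_mul x)).exp
      have h2 : HasDerivAt (fun θ : ℝ => Real.sin θ ^ (m + 1))
          (((m + 1 : ℕ) : ℝ) * Real.sin θ ^ m * Real.cos θ) θ := by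
        simpa using (Real.hasDerivAt_sin θ).fun_pow (m + 1)
      have := h1.fun_mul h2
      refine this.congr_deriv ?_
      push_cast
      ring
    have hint : IntervalIntegrable (fun θ : ℝ =>
        ((m : ℝ) + 1) * (Real.exp (x * Real.cos θ) * Real.sin θ ^ m * Real.cos θ)
          - x * (Real.exp (x * Real.cos θ) * Real.sin θ ^ (m + 2))) volume 0 π :=
      ((continuous_const.mul contC).sub (continuous_const.mul (contk (m + 2)))).intervalIntegrable 0 π
    have h0 := intervalIntegral.integral_eq_sub_of_hasDerivAt hderiv hint
    rw [intervalIntegral.integral_sub (intC.const_mul _) (intA.const_mul x),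
      intervalIntegral.integral_const_mul, intervalIntegral.integral_const_mul] at h0
    simp [Real.sin_pi, Real.sin_zero, zero_pow] at h0
    rw [← hA_def, ← hC_def] at h0
    linarith
  have hCpos : 0 < C := by nlinarith
  -- value of besselRatio
  have hval : besselRatio (m + 2) x = x / ((m : ℝ) + 1) * A / B := by
    unfold besselRatio
    rw [hNr]
    norm_num
    rfl
  refine ⟨?_, ?_, ?_⟩
  · rw [hval]
    positivity
  · rw [hval, hNr]
    have heq : x / ((m:ℝ) + 1) * A / B / x = A / (((m:ℝ) + 1) * B) := by
      field_simp
    rw [heq, div_lt_div_iff₀ (by positivity) hm1]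
    nlinarith
  · have hf : besselRatio (m + 2) x = C / B := by
      rw [hval]
      field_simp
      nlinarith
    rw [hf, div_pow, div_lt_one (by positivity)]
    nlinarith
end
end

section
/- For every x > 0, one has (1/x)(1 − N f(x)/x) > −4/(N−1). -/
open MeasureTheory Real

noncomputable section

set_option maxHeartbeats 1000000 in
/-- For every `x > 0`, `(1/x)(1 - N f(x)/x) > -4/(N-1)`. -/
theorem besselRatio_nasell_bound (N : ℕ) (hN : 2 ≤ N) (x : ℝ) (hx : 0 < x) :
    1 / x * (1 - (N : ℝ) * besselRatio N x / x) > -4 / ((N : ℝ) - 1) := by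
  obtain ⟨m, rfl⟩ : ∃ m, N = m + 2 := ⟨N - 2, by omega⟩
  have ci : ∀ f : ℝ → ℝ, Continuous f → ∀ a b : ℝ, IntervalIntegrable f volume a b :=
    fun f hf a b => hf.intervalIntegrable a b
  set E : ℝ → ℝ := fun θ => Real.exp (x * Real.cos θ) with hEdef
  have cE : Continuous E := Real.continuous_exp.comp (continuous_const.mul Real.continuous_cos)
  set B : ℝ := ∫ θ in (0:ℝ)..π, E θ * Real.sin θ ^ m with hBdef
  set A : ℝ := ∫ θ in (0:ℝ)..π, E θ * Real.sin θ ^ (m + 2) with hAdef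
  set D : ℝ := ∫ θ in (0:ℝ)..π, E θ * (Real.sin θ ^ m * Real.cos θ ^ 2) with hDdef
  set W : ℝ := ∫ θ in (0:ℝ)..π, Real.sin θ ^ m with hWdef
  have cB : Continuous fun θ => E θ * Real.sin θ ^ m := by fun_prop
  have cA : Continuous fun θ => E θ * Real.sin θ ^ (m + 2) := by fun_prop
  have cD : Continuous fun θ => E θ * (Real.sin θ ^ m * Real.cos θ ^ 2) := by fun_prop
  -- A = B - D
  have hA : A = B - D := by
    have : A = ∫ θ in (0:ℝ)..π, (E θ * Real.sin θ ^ m - E θ * (Real.sin θ ^ m * Real.cos θ ^ 2)) := by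
      rw [hAdef]
      apply intervalIntegral.integral_congr
      intro θ _
      simp only [pow_add, Real.sin_sq]
      ring
    rw [this, intervalIntegral.integral_sub (ci _ cB _ _) (ci _ cD _ _)]
  -- Wallis
  have hWallis : (∫ θ in (0:ℝ)..π, Real.sin θ ^ (m + 2)) = (m + 1) / (m + 2) * W := by
    rw [integral_sin_pow]
    simp
    exact Or.inl rfl
  -- ∫ sin^m cos^2 = W / (m+2)
  have hSC : (∫ θ in (0:ℝ)..π, Real.sin θ ^ m * Real.cos θ ^ 2) = W / (m + 2) := by
    have h1 : (∫ θ in (0:ℝ)..π, Real.sin θ ^ m * Real.cos θ ^ 2)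
        = ∫ θ in (0:ℝ)..π, (Real.sin θ ^ m - Real.sin θ ^ (m + 2)) := by
      apply intervalIntegral.integral_congr
      intro θ _
      simp only [pow_add, Real.sin_sq]
      ring
    rw [h1, intervalIntegral.integral_sub (ci _ (by fun_prop) _ _) (ci _ (by fun_prop) _ _),
      hWallis, ← hWdef]
    have : (m:ℝ) + 2 ≠ 0 := by positivity
    field_simp
    ring
  -- W = 2 * ∫_0^{π/2} sin^m
  have hhalf : W = 2 * ∫ θ in (0:ℝ)..(π/2), Real.sin θ ^ m := by
    have hsplit : (∫ θ in (0:ℝ)..(π/2), Real.sin θ ^ m) + (∫ θ in (π/2:ℝ)..π, Real.sin θ ^ m) = W := by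
      rw [hWdef]
      exact intervalIntegral.integral_add_adjacent_intervals (ci _ (by fun_prop) _ _) (ci _ (by fun_prop) _ _)
    have hrefl : (∫ θ in (π/2:ℝ)..π, Real.sin θ ^ m) = ∫ θ in (0:ℝ)..(π/2), Real.sin θ ^ m := by
      have := intervalIntegral.integral_comp_sub_left (fun θ => Real.sin θ ^ m) π (a := 0) (b := π/2)
      rw [show π - π/2 = π/2 by ring, show π - (0:ℝ) = π by ring] at this
      rw [← this]
      apply intervalIntegral.integral_congr
      intro θ _
      simp [Real.sin_pi_sub]
    linarith
  -- B ≥ half Wallis : ∫_0^{π/2} sin^m ≤ B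
  have hBhalf : (∫ θ in (0:ℝ)..(π/2), Real.sin θ ^ m) ≤ B := by
    have h1 : (∫ θ in (0:ℝ)..(π/2), Real.sin θ ^ m) ≤ ∫ θ in (0:ℝ)..(π/2), E θ * Real.sin θ ^ m := by
      apply intervalIntegral.integral_mono_on (by positivity) (ci _ (by fun_prop) _ _) (ci _ cB _ _)
      intro θ hθ
      have hc : 0 ≤ Real.cos θ := Real.cos_nonneg_of_mem_Icc ⟨by linarith [hθ.1, pi_pos.le], hθ.2⟩
      have hE1 : 1 ≤ E θ := by
        rw [hEdef]
        simpa using Real.one_le_exp (by positivity)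
      have hs : 0 ≤ Real.sin θ ^ m := by
        have : 0 ≤ Real.sin θ := Real.sin_nonneg_of_nonneg_of_le_pi hθ.1 (by linarith [pi_pos, hθ.2])
        positivity
      nlinarith
    have h2 : 0 ≤ ∫ θ in (π/2:ℝ)..π, E θ * Real.sin θ ^ m := by
      apply intervalIntegral.integral_nonneg (by linarith [pi_pos])
      intro θ hθ
      have : 0 ≤ Real.sin θ := Real.sin_nonneg_of_nonneg_of_le_pi (by linarith [pi_pos, hθ.1]) hθ.2
      positivity
    have hsplit : (∫ θ in (0:ℝ)..(π/2), E θ * Real.sin θ ^ m) + (∫ θ in (π/2:ℝ)..π, E θ * Real.sin θ ^ m) = B :=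
      intervalIntegral.integral_add_adjacent_intervals (ci _ cB _ _) (ci _ cB _ _)
    linarith
  -- B > 0
  have hBpos : 0 < B := by
    rw [hBdef]
    apply intervalIntegral.intervalIntegral_pos_of_pos_on (ci _ cB _ _) _ pi_pos
    intro θ hθ
    have hs : 0 < Real.sin θ := Real.sin_pos_of_pos_of_lt_pi hθ.1 hθ.2
    positivity
  have hWnn : 0 ≤ W := by
    rw [hWdef]
    apply intervalIntegral.integral_nonneg pi_pos.le
    intro θ hθ
    have : 0 ≤ Real.sin θ := Real.sin_nonneg_of_nonneg_of_le_pi hθ.1 hθ.2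
    positivity
  have hWB : W ≤ 2 * B := by rw [hhalf]; linarith
  -- ∫ sin^m (1 - (m+2) cos²) = 0
  have hzero : (∫ θ in (0:ℝ)..π, Real.sin θ ^ m * (1 - (m + 2) * Real.cos θ ^ 2)) = 0 := by
    have h1 : (∫ θ in (0:ℝ)..π, Real.sin θ ^ m * (1 - (m + 2) * Real.cos θ ^ 2))
        = (∫ θ in (0:ℝ)..π, Real.sin θ ^ m) - (m+2) * ∫ θ in (0:ℝ)..π, Real.sin θ ^ m * Real.cos θ ^ 2 := by
      rw [← intervalIntegral.integral_const_mul, ← intervalIntegral.integral_sub (ci _ (by fun_prop) _ _) (ci _ (by fun_prop) _ _)]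
      apply intervalIntegral.integral_congr
      intro θ _; ring
    rw [h1, hSC, ← hWdef]
    have : (m:ℝ) + 2 ≠ 0 := by positivity
    field_simp
    ring
  -- key: B - (m+2) D ≤ 3 x B
  have hkey : B - (m + 2) * D ≤ 3 * x * B := by
    have hrepr : B - (m + 2) * D
        = ∫ θ in (0:ℝ)..π, (E θ - 1) * (Real.sin θ ^ m * (1 - (m + 2) * Real.cos θ ^ 2)) := by
      have h1 : (∫ θ in (0:ℝ)..π, (E θ - 1) * (Real.sin θ ^ m * (1 - (m + 2) * Real.cos θ ^ 2)))
          = ∫ θ in (0:ℝ)..π, ((E θ * Real.sin θ ^ m - (m+2) * (E θ * (Real.sin θ ^ m * Real.cos θ ^ 2)))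
              - Real.sin θ ^ m * (1 - (m + 2) * Real.cos θ ^ 2)) := by
        apply intervalIntegral.integral_congr
        intro θ _; ring
      rw [h1, intervalIntegral.integral_sub, intervalIntegral.integral_sub,
        intervalIntegral.integral_const_mul, hzero, ← hBdef, ← hDdef]
      · ring
      · exact ci _ cB _ _
      · exact ci _ (by fun_prop) _ _
      · exact (ci _ cB _ _).sub ((ci _ cD _ _).const_mul _)
      · exact ci _ (by fun_prop) _ _
    have hmono : (∫ θ in (0:ℝ)..π, (E θ - 1) * (Real.sin θ ^ m * (1 - (m + 2) * Real.cos θ ^ 2)))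
        ≤ ∫ θ in (0:ℝ)..π, x * (E θ * Real.sin θ ^ m + (m + 2) * (Real.sin θ ^ m * Real.cos θ ^ 2)) := by
      apply intervalIntegral.integral_mono_on pi_pos.le (ci _ (by fun_prop) _ _) (ci _ (by fun_prop) _ _)
      intro θ hθ
      have hs : 0 ≤ Real.sin θ ^ m := by
        have : 0 ≤ Real.sin θ := Real.sin_nonneg_of_nonneg_of_le_pi hθ.1 hθ.2
        positivity
      have hc1 : Real.cos θ ≤ 1 := Real.cos_le_one θ
      have hc2 : -1 ≤ Real.cos θ := Real.neg_one_le_cos θ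
      set c := Real.cos θ
      have hEv : E θ = Real.exp (x * c) := rfl
      rcases le_or_gt 0 c with hc | hc
      · -- c ≥ 0
        have ht : 0 ≤ x * c := by positivity
        have h1 : Real.exp (x * c) - 1 ≤ (x * c) * Real.exp (x * c) := by
          have h := mul_le_mul_of_nonneg_right (Real.add_one_le_exp (-(x*c))) (Real.exp_pos (x*c)).le
          rw [Real.exp_neg, inv_mul_cancel₀ (Real.exp_pos (x*c)).ne'] at h
          nlinarith
        have h2 : (1:ℝ) ≤ Real.exp (x * c) := Real.one_le_exp ht
        have hcc : 0 ≤ ((m:ℝ) + 2) * c ^ 2 := by positivity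
        rw [hEv]
        nlinarith [mul_le_mul_of_nonneg_right h1 hs,
          mul_nonneg (mul_nonneg hcc hs) (sub_nonneg.mpr h2),
          mul_nonneg (mul_nonneg hx.le hcc) hs,
          mul_le_mul_of_nonneg_left hc1 (mul_nonneg (mul_nonneg hx.le (Real.exp_pos (x*c)).le) hs),
          mul_nonneg (mul_nonneg hx.le hc) (mul_nonneg (Real.exp_pos (x*c)).le hs)]
      · -- c < 0
        have hE1 : Real.exp (x * c) ≤ 1 := Real.exp_le_one_iff.mpr (by nlinarith)
        have h1 : 1 - Real.exp (x * c) ≤ x * (-c) := by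
          nlinarith [Real.add_one_le_exp (x*c)]
        have h2 : 0 ≤ 1 - Real.exp (x * c) := by linarith
        have h3 : x * (-c) ≤ x := by nlinarith
        have hcc : 0 ≤ ((m:ℝ) + 2) * c ^ 2 := by positivity
        rw [hEv]
        nlinarith [Real.exp_pos (x*c), mul_nonneg hs hcc,
          mul_le_mul_of_nonneg_left (h1.trans h3) hcc,
          mul_nonneg h2 hs, mul_nonneg hs (Real.exp_pos (x*c)).le]
    have hval : (∫ θ in (0:ℝ)..π, x * (E θ * Real.sin θ ^ m + (m + 2) * (Real.sin θ ^ m * Real.cos θ ^ 2)))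
        = x * (B + W) := by
      rw [intervalIntegral.integral_const_mul,
        intervalIntegral.integral_add (ci _ cB _ _) ((ci _ (by fun_prop) _ _)),
        intervalIntegral.integral_const_mul, hSC, ← hBdef]
      have : (m:ℝ) + 2 ≠ 0 := by positivity
      field_simp
    rw [hrepr]
    rw [hval] at hmono
    nlinarith
  -- final algebra
  have hNcast : ((m + 2 : ℕ) : ℝ) = (m : ℝ) + 2 := by push_cast; ring
  have hx' : x ≠ 0 := hx.ne'
  have hB' : B ≠ 0 := hBpos.ne'
  have hm1 : (0:ℝ) < (m:ℝ) + 1 := by positivity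
  have hfval : besselRatio (m + 2) x = x / ((m:ℝ) + 1) * A / B := by
    rw [besselRatio, hNcast]
    norm_num [← hAdef, ← hBdef, hEdef]
    rw [show (m:ℝ) + 2 - 1 = (m:ℝ) + 1 by ring]
  rw [gt_iff_lt, hfval, hNcast]
  have heq : 1 / x * (1 - ((m:ℝ) + 2) * (x / ((m:ℝ) + 1) * A / B) / x)
      = (((m:ℝ) + 2) * D - B) / (x * (((m:ℝ) + 1) * B)) := by
    rw [hA]
    field_simp
    ring
  have heq2 : -4 / ((m:ℝ) + 2 - 1) = (-4 * (x * B)) / (x * (((m:ℝ) + 1) * B)) := by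
    rw [show (m:ℝ) + 2 - 1 = (m:ℝ) + 1 by ring]
    field_simp
  rw [heq, heq2]
  have hnum : -4 * (x * B) < ((m:ℝ) + 2) * D - B := by nlinarith [mul_pos hx hBpos]
  exact div_lt_div_of_pos_right hnum (by positivity)


end
end
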